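/- arXiv:2204.08949 — 3 statements merged into one kernel-verified Lean document; each statement's English description precedes it below -/
import Mathlib

section
/- Let a < b be real numbers and let f : [a,b] → ℝ be twice continuously differentiable with the following properties: (a) f(a) = f(b) = 0; (b) |f'(a)| = |f'(b)| ≥ 1; (c) f' has a unique zero c in the open interval (a,b); (d) f'' has at most one zero in [a,c] and at most one zero in [c,b]; (e) f'' has no non-negative local minima and no non-positive local maxima on (a,b) (i.e. if x ∈ (a,b) is a local minimum of f'' then f''(x) < 0, and if x is a local maximum of f'' then f''(x) > 0). Then |f(x)| > min{x − a, b − x}/20 for all x ∈ (a,b). -/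
open Set

namespace Stmt6Aux

/-- IVT helper: a continuous function going from positive to negative has a zero strictly
between. -/
private lemma ivt_zero {g : ℝ → ℝ} {u v s t : ℝ} (hg : ContinuousOn g (Icc u v))
    (hs : s ∈ Icc u v) (ht : t ∈ Icc u v) (hst : s < t) (hgs : 0 < g s) (hgt : g t < 0) :
    ∃ r ∈ Ioo s t, g r = 0 := by
  have hsub : Icc s t ⊆ Icc u v := Icc_subset_Icc hs.1 ht.2
  have h := intermediate_value_Ioo' hst.le (hg.mono hsub)
  obtain ⟨r, hr, hr0⟩ := h (show (0:ℝ) ∈ Ioo (g t) (g s) from ⟨hgt, hgs⟩)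
  exact ⟨r, hr, hr0⟩

/-- IVT helper: a continuous function going from negative to positive has a zero strictly
between. -/
private lemma ivt_zero' {g : ℝ → ℝ} {u v s t : ℝ} (hg : ContinuousOn g (Icc u v))
    (hs : s ∈ Icc u v) (ht : t ∈ Icc u v) (hst : s < t) (hgs : g s < 0) (hgt : 0 < g t) :
    ∃ r ∈ Ioo s t, g r = 0 := by
  have hsub : Icc s t ⊆ Icc u v := Icc_subset_Icc hs.1 ht.2
  have h := intermediate_value_Ioo hst.le (hg.mono hsub)
  obtain ⟨r, hr, hr0⟩ := h (show (0:ℝ) ∈ Ioo (g s) (g t) from ⟨hgs, hgt⟩)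
  exact ⟨r, hr, hr0⟩

/-- Monotonicity of `f` on a subinterval from a lower bound on an interval integral. -/
private lemma int_lb {f f' : ℝ → ℝ} {u v K : ℝ} (huv : u ≤ v)
    (hcont : ContinuousOn f (Icc u v)) (hcont' : ContinuousOn f' (Icc u v))
    (hd : ∀ t ∈ Ioo u v, HasDerivAt f (f' t) t)
    (hK : ∀ t ∈ Icc u v, K ≤ f' t) : K * (v - u) ≤ f v - f u := by
  have hftc := intervalIntegral.integral_eq_sub_of_hasDerivAt_of_le huv hcont hd
    (hcont'.intervalIntegrable_of_Icc huv)
  have h := intervalIntegral.integral_mono_on (μ := MeasureTheory.volume) huv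
    (intervalIntegrable_const) (hcont'.intervalIntegrable_of_Icc huv) hK
  rw [hftc] at h
  rwa [intervalIntegral.integral_const, smul_eq_mul, mul_comm] at h

private lemma int_ub {f f' : ℝ → ℝ} {u v K : ℝ} (huv : u ≤ v)
    (hcont : ContinuousOn f (Icc u v)) (hcont' : ContinuousOn f' (Icc u v))
    (hd : ∀ t ∈ Ioo u v, HasDerivAt f (f' t) t)
    (hK : ∀ t ∈ Icc u v, f' t ≤ K) : f v - f u ≤ K * (v - u) := by
  have hftc := intervalIntegral.integral_eq_sub_of_hasDerivAt_of_le huv hcont hd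
    (hcont'.intervalIntegrable_of_Icc huv)
  have h := intervalIntegral.integral_mono_on (μ := MeasureTheory.volume) huv
    (hcont'.intervalIntegrable_of_Icc huv) (intervalIntegrable_const) hK
  rw [hftc] at h
  rwa [intervalIntegral.integral_const, smul_eq_mul, mul_comm] at h

/-- Linear lower bound for the derivative gives a quadratic lower bound on increments. -/
private lemma int_lb_lin {f f' : ℝ → ℝ} {u v A B : ℝ} (huv : u ≤ v)
    (hcont : ContinuousOn f (Icc u v)) (hcont' : ContinuousOn f' (Icc u v))
    (hd : ∀ t ∈ Ioo u v, HasDerivAt f (f' t) t)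
    (hK : ∀ t ∈ Icc u v, A + B * t ≤ f' t) :
    A * (v - u) + B * (v ^ 2 - u ^ 2) / 2 ≤ f v - f u := by
  have hftc := intervalIntegral.integral_eq_sub_of_hasDerivAt_of_le huv hcont hd
    (hcont'.intervalIntegrable_of_Icc huv)
  have hint : IntervalIntegrable (fun t : ℝ => A + B * t) MeasureTheory.volume u v :=
    (Continuous.intervalIntegrable (by continuity) _ _)
  have h := intervalIntegral.integral_mono_on (μ := MeasureTheory.volume) huv
    hint (hcont'.intervalIntegrable_of_Icc huv) hK
  rw [hftc] at h
  have hcomp : (∫ t in u..v, (A + B * t)) = A * (v - u) + B * (v ^ 2 - u ^ 2) / 2 := by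
    have hder : ∀ t ∈ uIcc u v, HasDerivAt (fun s => A * s + B * s ^ 2 / 2) (A + B * t) t := by
      intro t _
      have h1 : HasDerivAt (fun s : ℝ => A * s) (A * 1) t := (hasDerivAt_id t).const_mul A
      have h2 : HasDerivAt (fun s : ℝ => B * s ^ 2 / 2) (B * (2 * t ^ 1) / 2) t :=
        ((hasDerivAt_pow 2 t).const_mul B).div_const 2
      have : HasDerivAt (fun s => A * s + B * s ^ 2 / 2) (A * 1 + B * (2 * t ^ 1) / 2) t := h1.add h2
      convert this using 1
      ring
    rw [intervalIntegral.integral_eq_sub_of_hasDerivAt hder hint]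
    ring
  rwa [hcomp] at h

private lemma int_ub_lin {f f' : ℝ → ℝ} {u v A B : ℝ} (huv : u ≤ v)
    (hcont : ContinuousOn f (Icc u v)) (hcont' : ContinuousOn f' (Icc u v))
    (hd : ∀ t ∈ Ioo u v, HasDerivAt f (f' t) t)
    (hK : ∀ t ∈ Icc u v, f' t ≤ A + B * t) :
    f v - f u ≤ A * (v - u) + B * (v ^ 2 - u ^ 2) / 2 := by
  have hftc := intervalIntegral.integral_eq_sub_of_hasDerivAt_of_le huv hcont hd
    (hcont'.intervalIntegrable_of_Icc huv)
  have hint : IntervalIntegrable (fun t : ℝ => A + B * t) MeasureTheory.volume u v :=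
    (Continuous.intervalIntegrable (by continuity) _ _)
  have h := intervalIntegral.integral_mono_on (μ := MeasureTheory.volume) huv
    (hcont'.intervalIntegrable_of_Icc huv) hint hK
  rw [hftc] at h
  have hcomp : (∫ t in u..v, (A + B * t)) = A * (v - u) + B * (v ^ 2 - u ^ 2) / 2 := by
    have hder : ∀ t ∈ uIcc u v, HasDerivAt (fun s => A * s + B * s ^ 2 / 2) (A + B * t) t := by
      intro t _
      have h1 : HasDerivAt (fun s : ℝ => A * s) (A * 1) t := (hasDerivAt_id t).const_mul A
      have h2 : HasDerivAt (fun s : ℝ => B * s ^ 2 / 2) (B * (2 * t ^ 1) / 2) t :=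
        ((hasDerivAt_pow 2 t).const_mul B).div_const 2
      have : HasDerivAt (fun s => A * s + B * s ^ 2 / 2) (A * 1 + B * (2 * t ^ 1) / 2) t := h1.add h2
      convert this using 1
      ring
    rw [intervalIntegral.integral_eq_sub_of_hasDerivAt hder hint]
    ring
  rwa [hcomp] at h

private lemma reflect_isLocalMax {h : ℝ → ℝ} {a b y : ℝ}
    (H : IsLocalMaxOn (fun u => h (a + b - u)) (Ioo a b) y) :
    IsLocalMaxOn h (Ioo a b) (a + b - y) := by
  rw [IsLocalMaxOn, IsMaxFilter, eventually_nhdsWithin_iff, Metric.eventually_nhds_iff] at H ⊢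
  obtain ⟨ε, hε, hH⟩ := H
  refine ⟨ε, hε, fun v hv hvmem => ?_⟩
  have h1 : dist (a + b - v) y < ε := by
    rw [Real.dist_eq] at hv ⊢
    have : a + b - v - y = -(v - (a + b - y)) := by ring
    rw [this, abs_neg]
    exact hv
  have h2 : (a + b - v) ∈ Ioo a b := ⟨by linarith [hvmem.1, hvmem.2], by linarith [hvmem.1]⟩
  have h3 := hH h1 h2
  have h4 : a + b - (a + b - v) = v := by ring
  rw [h4] at h3
  exact h3

private lemma reflect_isLocalMin {h : ℝ → ℝ} {a b y : ℝ}
    (H : IsLocalMinOn (fun u => h (a + b - u)) (Ioo a b) y) :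
    IsLocalMinOn h (Ioo a b) (a + b - y) := by
  rw [IsLocalMinOn, IsMinFilter, eventually_nhdsWithin_iff, Metric.eventually_nhds_iff] at H ⊢
  obtain ⟨ε, hε, hH⟩ := H
  refine ⟨ε, hε, fun v hv hvmem => ?_⟩
  have h1 : dist (a + b - v) y < ε := by
    rw [Real.dist_eq] at hv ⊢
    have : a + b - v - y = -(v - (a + b - y)) := by ring
    rw [this, abs_neg]
    exact hv
  have h2 : (a + b - v) ∈ Ioo a b := ⟨by linarith [hvmem.1, hvmem.2], by linarith [hvmem.1]⟩
  have h3 := hH h1 h2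
  have h4 : a + b - (a + b - v) = v := by ring
  rw [h4] at h3
  exact h3


/-- If `f'(a) > 0`, then `f'(b) < 0`. -/
private lemma fpb_neg (a b c : ℝ) (f f' f'' : ℝ → ℝ) (hab : a < b)
    (hderiv1 : ∀ x ∈ Icc a b, HasDerivWithinAt f (f' x) (Icc a b) x)
    (hderiv2 : ∀ x ∈ Icc a b, HasDerivWithinAt f' (f'' x) (Icc a b) x)
    (hfa : f a = 0) (hfb : f b = 0)
    (hfab : |f' a| = |f' b|) (hfa1 : 1 ≤ |f' a|)
    (hc : c ∈ Ioo a b) (hc0 : f' c = 0)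
    (hcuniq : ∀ x ∈ Ioo a b, f' x = 0 → x = c)
    (hpos : 0 < f' a) : f' b < 0 := by
  have hac : a < c := hc.1
  have hcb : c < b := hc.2
  have contf : ContinuousOn f (Icc a b) := fun x hx => (hderiv1 x hx).continuousWithinAt
  have contf' : ContinuousOn f' (Icc a b) := fun x hx => (hderiv2 x hx).continuousWithinAt
  have hfd : ∀ x ∈ Ioo a b, HasDerivAt f (f' x) x := fun x hx =>
    (hderiv1 x (Ioo_subset_Icc_self hx)).hasDerivAt (Icc_mem_nhds hx.1 hx.2)
  -- f' > 0 on [a, c)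
  have fppos : ∀ t ∈ Ico a c, 0 < f' t := by
    rintro t ⟨hat, htc⟩
    rcases eq_or_lt_of_le hat with rfl | hat'
    · exact hpos
    by_contra hle
    push_neg at hle
    rcases hle.lt_or_eq with hlt | heq
    · obtain ⟨r, hr, hr0⟩ := ivt_zero contf' ⟨le_refl a, hab.le⟩
        ⟨hat, (htc.trans hcb).le⟩ hat' hpos hlt
      have := hcuniq r ⟨hr.1, hr.2.trans (htc.trans hcb)⟩ hr0
      linarith [hr.2]
    · exact absurd (hcuniq t ⟨hat', htc.trans hcb⟩ heq) (ne_of_lt htc)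
  -- f' < 0 on (c, b)
  have fnneg : ∀ t ∈ Ioo c b, f' t < 0 := by
    have key : ∀ t ∈ Ioo c b, f' t ≠ 0 := fun t ht h0 =>
      absurd (hcuniq t ⟨hac.trans ht.1, ht.2⟩ h0) (ne_of_gt ht.1)
    by_contra hcon
    push_neg at hcon
    obtain ⟨t1, ht1, ht1nn⟩ := hcon
    have ht1pos : 0 < f' t1 := ht1nn.lt_of_ne (fun h => key t1 ht1 h.symm)
    have hall : ∀ t ∈ Ioo c b, 0 ≤ f' t := by
      intro t ht
      by_contra h
      push_neg at h
      rcases lt_trichotomy t t1 with h1 | rfl | h1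
      · obtain ⟨r, hr, hr0⟩ := ivt_zero' contf' ⟨(hac.trans ht.1).le, ht.2.le⟩
          ⟨(hac.trans ht1.1).le, ht1.2.le⟩ h1 h ht1pos
        exact key r ⟨ht.1.trans hr.1, hr.2.trans ht1.2⟩ hr0
      · linarith
      · obtain ⟨r, hr, hr0⟩ := ivt_zero contf' ⟨(hac.trans ht1.1).le, ht1.2.le⟩
          ⟨(hac.trans ht.1).le, ht.2.le⟩ h1 ht1pos h
        exact key r ⟨ht1.1.trans hr.1, hr.2.trans ht.2⟩ hr0
    have hmonoac : StrictMonoOn f (Icc a c) := by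
      apply strictMonoOn_of_deriv_pos (convex_Icc a c) (contf.mono (Icc_subset_Icc le_rfl hcb.le))
      intro t ht
      rw [interior_Icc] at ht
      rw [(hfd t ⟨ht.1, ht.2.trans hcb⟩).deriv]
      exact fppos t ⟨ht.1.le, ht.2⟩
    have hfc : 0 < f c := by
      have := hmonoac ⟨le_rfl, hac.le⟩ ⟨hac.le, le_rfl⟩ hac
      rwa [hfa] at this
    have hmonocb : MonotoneOn f (Icc c b) := by
      apply monotoneOn_of_deriv_nonneg (convex_Icc c b) (contf.mono (Icc_subset_Icc hac.le le_rfl))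
      · intro t ht
        rw [interior_Icc] at ht
        exact (hfd t ⟨hac.trans ht.1, ht.2⟩).differentiableAt.differentiableWithinAt
      · intro t ht
        rw [interior_Icc] at ht
        rw [(hfd t ⟨hac.trans ht.1, ht.2⟩).deriv]
        exact hall t ht
    have h2 : f c ≤ f b := hmonocb ⟨le_rfl, hcb.le⟩ ⟨hcb.le, le_rfl⟩ hcb.le
    rw [hfb] at h2
    linarith
  -- conclude
  have h0 : f' b ≠ 0 := by
    intro h
    rw [h, abs_zero] at hfab
    rw [hfab] at hfa1
    linarith
  by_contra h
  push_neg at h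
  have hb_pos : 0 < f' b := h.lt_of_ne (Ne.symm h0)
  set t1 := (c + b) / 2 with ht1def
  have ht1 : t1 ∈ Ioo c b := ⟨by simp [ht1def]; linarith, by simp [ht1def]; linarith⟩
  obtain ⟨r, hr, hr0⟩ := ivt_zero' contf' ⟨(hac.trans ht1.1).le, ht1.2.le⟩
    ⟨hab.le, le_rfl⟩ ht1.2 (fnneg t1 ht1) hb_pos
  have := hcuniq r ⟨hac.trans (ht1.1.trans hr.1), hr.2⟩ hr0
  linarith [ht1.1, hr.1]


set_option maxHeartbeats 1000000 in
/-- Core quantitative lemma: in the case `f'(a) > 0`, we have `f(x) > (x-a)/20` for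
`x ∈ (a, c]`. -/
private lemma core (a b c : ℝ) (f f' f'' : ℝ → ℝ) (hab : a < b)
    (hderiv1 : ∀ x ∈ Icc a b, HasDerivWithinAt f (f' x) (Icc a b) x)
    (hderiv2 : ∀ x ∈ Icc a b, HasDerivWithinAt f' (f'' x) (Icc a b) x)
    (hcont : ContinuousOn f'' (Icc a b))
    (hfa : f a = 0) (hfb : f b = 0)
    (hfab : |f' a| = |f' b|) (hfa1 : 1 ≤ |f' a|)
    (hc : c ∈ Ioo a b) (hc0 : f' c = 0)
    (hcuniq : ∀ x ∈ Ioo a b, f' x = 0 → x = c)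
    (hd1 : {x | x ∈ Icc a c ∧ f'' x = 0}.Subsingleton)
    (hd2 : {x | x ∈ Icc c b ∧ f'' x = 0}.Subsingleton)
    (he2 : ∀ x ∈ Ioo a b, IsLocalMaxOn f'' (Ioo a b) x → 0 < f'' x)
    (hpos : 0 < f' a) :
    ∀ x ∈ Ioo a b, x ≤ c → (x - a) / 20 < f x := by
  have hac : a < c := hc.1
  have hcb : c < b := hc.2
  have contf : ContinuousOn f (Icc a b) := fun x hx => (hderiv1 x hx).continuousWithinAt
  have contf' : ContinuousOn f' (Icc a b) := fun x hx => (hderiv2 x hx).continuousWithinAt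
  have hfd : ∀ x ∈ Ioo a b, HasDerivAt f (f' x) x := fun x hx =>
    (hderiv1 x (Ioo_subset_Icc_self hx)).hasDerivAt (Icc_mem_nhds hx.1 hx.2)
  have hf'd : ∀ x ∈ Ioo a b, HasDerivAt f' (f'' x) x := fun x hx =>
    (hderiv2 x (Ioo_subset_Icc_self hx)).hasDerivAt (Icc_mem_nhds hx.1 hx.2)
  set d := f' a with hddef
  have hd1' : 1 ≤ d := by rwa [abs_of_pos hpos] at hfa1
  have hfpb : f' b < 0 := fpb_neg a b c f f' f'' hab hderiv1 hderiv2 hfa hfb hfab hfa1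
    hc hc0 hcuniq hpos
  have hfb' : f' b = -d := by
    rw [abs_of_pos hpos, abs_of_neg hfpb] at hfab
    linarith
  -- monotonicity helpers
  have monoF' : ∀ u v : ℝ, a ≤ u → v ≤ b → (∀ t ∈ Ioo u v, 0 ≤ f'' t) →
      MonotoneOn f' (Icc u v) := by
    intro u v hu hv hsgn
    apply monotoneOn_of_deriv_nonneg (convex_Icc u v) (contf'.mono (Icc_subset_Icc hu hv))
    · intro t ht
      rw [interior_Icc] at ht
      exact (hf'd t ⟨hu.trans_lt ht.1, ht.2.trans_le hv⟩).differentiableAt.differentiableWithinAt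
    · intro t ht
      rw [interior_Icc] at ht
      rw [(hf'd t ⟨hu.trans_lt ht.1, ht.2.trans_le hv⟩).deriv]
      exact hsgn t ht
  have antiF' : ∀ u v : ℝ, a ≤ u → v ≤ b → (∀ t ∈ Ioo u v, f'' t ≤ 0) →
      AntitoneOn f' (Icc u v) := by
    intro u v hu hv hsgn
    apply antitoneOn_of_deriv_nonpos (convex_Icc u v) (contf'.mono (Icc_subset_Icc hu hv))
    · intro t ht
      rw [interior_Icc] at ht
      exact (hf'd t ⟨hu.trans_lt ht.1, ht.2.trans_le hv⟩).differentiableAt.differentiableWithinAt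
    · intro t ht
      rw [interior_Icc] at ht
      rw [(hf'd t ⟨hu.trans_lt ht.1, ht.2.trans_le hv⟩).deriv]
      exact hsgn t ht
  have strictF' : ∀ u v : ℝ, a ≤ u → v ≤ b → (∀ t ∈ Ioo u v, 0 < f'' t) →
      StrictMonoOn f' (Icc u v) := by
    intro u v hu hv hsgn
    apply strictMonoOn_of_deriv_pos (convex_Icc u v) (contf'.mono (Icc_subset_Icc hu hv))
    intro t ht
    rw [interior_Icc] at ht
    rw [(hf'd t ⟨hu.trans_lt ht.1, ht.2.trans_le hv⟩).deriv]
    exact hsgn t ht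
  have monoIccSelf : ∀ u : ℝ, MonotoneOn f' (Icc u u) := by
    intro u s hs t ht _
    rw [Icc_self, mem_singleton_iff] at hs ht
    rw [hs, ht]
  -- f' > 0 on [a, c)
  have fppos : ∀ t ∈ Ico a c, 0 < f' t := by
    rintro t ⟨hat, htc⟩
    rcases eq_or_lt_of_le hat with rfl | hat'
    · exact hpos
    by_contra hle
    push_neg at hle
    rcases hle.lt_or_eq with hlt | heq
    · obtain ⟨r, hr, hr0⟩ := ivt_zero contf' ⟨le_refl a, hab.le⟩
        ⟨hat, (htc.trans hcb).le⟩ hat' hpos hlt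
      have := hcuniq r ⟨hr.1, hr.2.trans (htc.trans hcb)⟩ hr0
      linarith [hr.2]
    · exact absurd (hcuniq t ⟨hat', htc.trans hcb⟩ heq) (ne_of_lt htc)
  have fpnonneg : ∀ t ∈ Icc a c, 0 ≤ f' t := by
    rintro t ⟨hat, htc⟩
    rcases eq_or_lt_of_le htc with rfl | h
    · rw [hc0]
    · exact (fppos t ⟨hat, h⟩).le
  -- f' < 0 on (c, b)
  have fnneg : ∀ t ∈ Ioo c b, f' t < 0 := by
    intro t ht
    by_contra hle
    push_neg at hle
    rcases hle.lt_or_eq with hlt | heq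
    · obtain ⟨r, hr, hr0⟩ := ivt_zero contf' ⟨(hac.trans ht.1).le, ht.2.le⟩
        ⟨hab.le, le_rfl⟩ ht.2 hlt hfpb
      have := hcuniq r ⟨hac.trans (ht.1.trans hr.1), hr.2⟩ hr0
      linarith [hr.1, ht.1]
    · exact absurd (hcuniq t ⟨hac.trans ht.1, ht.2⟩ heq.symm) (ne_of_gt ht.1)
  -- S1: structure on [a, c]
  have zero_unique1 : ∀ z0 ∈ Icc a c, f'' z0 = 0 → ∀ r ∈ Icc a c, f'' r = 0 → r = z0 := by
    intro z0 hz0 hz00 r hr hr0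
    exact hd1 (show r ∈ {x | x ∈ Icc a c ∧ f'' x = 0} from ⟨hr, hr0⟩) ⟨hz0, hz00⟩
  have contf''ab := hcont
  obtain ⟨z, haz, hzc, hzmono, hznp⟩ :
      ∃ z, a ≤ z ∧ z ≤ c ∧ MonotoneOn f' (Icc a z) ∧ ∀ t ∈ Icc z c, f'' t ≤ 0 := by
    by_cases hex : ∃ z0 ∈ Icc a c, f'' z0 = 0
    · obtain ⟨z0, hz0, hz00⟩ := hex
      have hnp : ∀ t ∈ Ioc z0 c, f'' t ≤ 0 := by
        by_contra hcon
        push_neg at hcon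
        obtain ⟨t1, ht1, ht1pos⟩ := hcon
        have hz0c : z0 < c := lt_of_lt_of_le ht1.1 ht1.2
        have hposall : ∀ t ∈ Ioc z0 c, 0 < f'' t := by
          intro t ht
          by_contra hle
          push_neg at hle
          rcases hle.lt_or_eq with hlt | heq
          · rcases lt_trichotomy t t1 with h1 | rfl | h1
            · obtain ⟨r, hr, hr0⟩ := ivt_zero' hcont
                ⟨(hz0.1.trans ht.1.le), ht.2.trans hcb.le⟩
                ⟨hz0.1.trans ht1.1.le, ht1.2.trans hcb.le⟩ h1 hlt ht1pos
              have := zero_unique1 z0 hz0 hz00 r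
                ⟨hz0.1.trans (ht.1.trans hr.1).le, hr.2.le.trans ht1.2⟩ hr0
              linarith [hr.1, ht.1]
            · linarith
            · obtain ⟨r, hr, hr0⟩ := ivt_zero hcont
                ⟨hz0.1.trans ht1.1.le, ht1.2.trans hcb.le⟩
                ⟨hz0.1.trans ht.1.le, ht.2.trans hcb.le⟩ h1 ht1pos hlt
              have := zero_unique1 z0 hz0 hz00 r
                ⟨hz0.1.trans (ht1.1.trans hr.1).le, hr.2.le.trans ht.2⟩ hr0
              linarith [hr.1, ht1.1]
          · have := zero_unique1 z0 hz0 hz00 t ⟨hz0.1.trans ht.1.le, ht.2⟩ heq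
            linarith [ht.1]
        have hsm : StrictMonoOn f' (Icc z0 c) :=
          strictF' z0 c hz0.1 hcb.le (fun t ht => hposall t ⟨ht.1, ht.2.le⟩)
        have h1 : f' z0 < f' c := hsm ⟨le_rfl, hz0c.le⟩ ⟨hz0c.le, le_rfl⟩ hz0c
        rw [hc0] at h1
        have := fppos z0 ⟨hz0.1, hz0c⟩
        linarith
      by_cases hpos2 : ∀ t ∈ Ico a z0, 0 ≤ f'' t
      · refine ⟨z0, hz0.1, hz0.2,
          monoF' a z0 le_rfl (hz0.2.trans hcb.le) (fun t ht => hpos2 t ⟨ht.1.le, ht.2⟩), ?_⟩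
        intro t ht
        rcases eq_or_lt_of_le ht.1 with rfl | h'
        · exact le_of_eq hz00
        · exact hnp t ⟨h', ht.2⟩
      · push_neg at hpos2
        obtain ⟨t2, ht2, ht2neg⟩ := hpos2
        have hallnp : ∀ t ∈ Icc a c, f'' t ≤ 0 := by
          intro t ht
          by_contra hgt
          push_neg at hgt
          rcases le_or_gt t z0 with h1 | h1
          · rcases eq_or_lt_of_le h1 with rfl | h1'
            · linarith [hz00]
            · rcases lt_trichotomy t t2 with h2 | rfl | h2
              · obtain ⟨r, hr, hr0⟩ := ivt_zero hcont ⟨ht.1, ht.2.trans hcb.le⟩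
                  ⟨ht2.1, (ht2.2.trans_le hz0.2).le.trans hcb.le⟩ h2 hgt ht2neg
                have := zero_unique1 z0 hz0 hz00 r
                  ⟨ht.1.trans hr.1.le, (hr.2.trans (ht2.2.trans_le hz0.2)).le⟩ hr0
                linarith [hr.2, ht2.2]
              · linarith
              · obtain ⟨r, hr, hr0⟩ := ivt_zero' hcont
                  ⟨ht2.1, (ht2.2.trans_le hz0.2).le.trans hcb.le⟩
                  ⟨ht.1, ht.2.trans hcb.le⟩ h2 ht2neg hgt
                have := zero_unique1 z0 hz0 hz00 r
                  ⟨ht2.1.trans hr.1.le, ((hr.2.trans h1').le.trans hz0.2)⟩ hr0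
                linarith [hr.2, h1']
          · have := hnp t ⟨h1, ht.2⟩
            linarith
        exact ⟨a, le_rfl, hac.le, monoIccSelf a, fun t ht => hallnp t ht⟩
    · push_neg at hex
      have hallneg : ∀ t ∈ Icc a c, f'' t < 0 := by
        intro t ht
        by_contra hnn
        push_neg at hnn
        have htpos : 0 < f'' t := hnn.lt_of_ne (fun h => hex t ht h.symm)
        have hallpos : ∀ s ∈ Icc a c, 0 < f'' s := by
          intro s hs
          by_contra hle
          push_neg at hle
          rcases hle.lt_or_eq with hlt | heq
          · rcases lt_trichotomy s t with h1 | rfl | h1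
            · obtain ⟨r, hr, hr0⟩ := ivt_zero' hcont ⟨hs.1, hs.2.trans hcb.le⟩
                ⟨ht.1, ht.2.trans hcb.le⟩ h1 hlt htpos
              exact hex r ⟨hs.1.trans hr.1.le, hr.2.le.trans ht.2⟩ hr0
            · linarith
            · obtain ⟨r, hr, hr0⟩ := ivt_zero hcont ⟨ht.1, ht.2.trans hcb.le⟩
                ⟨hs.1, hs.2.trans hcb.le⟩ h1 htpos hlt
              exact hex r ⟨ht.1.trans hr.1.le, hr.2.le.trans hs.2⟩ hr0
          · exact hex s hs heq
        have hsm : StrictMonoOn f' (Icc a c) :=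
          strictF' a c le_rfl hcb.le (fun s hs => hallpos s ⟨hs.1.le, hs.2.le⟩)
        have h1 : f' a < f' c := hsm ⟨le_rfl, hac.le⟩ ⟨hac.le, le_rfl⟩ hac
        rw [hc0] at h1
        linarith
      exact ⟨a, le_rfl, hac.le, monoIccSelf a, fun t ht => (hallneg t ht).le⟩
  -- S2: structure on [c, b]
  have zero_unique2 : ∀ w0 ∈ Icc c b, f'' w0 = 0 → ∀ r ∈ Icc c b, f'' r = 0 → r = w0 := by
    intro w0 hw0 hw00 r hr hr0
    exact hd2 (show r ∈ {x | x ∈ Icc c b ∧ f'' x = 0} from ⟨hr, hr0⟩) ⟨hw0, hw00⟩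
  obtain ⟨w, hcw, hwb, hwnp, hwmono⟩ :
      ∃ w, c ≤ w ∧ w ≤ b ∧ (∀ t ∈ Icc c w, f'' t ≤ 0) ∧ MonotoneOn f' (Icc w b) := by
    by_cases hex : ∃ w0 ∈ Icc c b, f'' w0 = 0
    · obtain ⟨w0, hw0, hw00⟩ := hex
      have hnp : ∀ t ∈ Ico c w0, f'' t ≤ 0 := by
        by_contra hcon
        push_neg at hcon
        obtain ⟨t1, ht1, ht1pos⟩ := hcon
        have hcw0 : c < w0 := lt_of_le_of_lt ht1.1 ht1.2
        have hposall : ∀ t ∈ Ico c w0, 0 < f'' t := by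
          intro t ht
          by_contra hle
          push_neg at hle
          rcases hle.lt_or_eq with hlt | heq
          · rcases lt_trichotomy t t1 with h1 | rfl | h1
            · obtain ⟨r, hr, hr0⟩ := ivt_zero' hcont ⟨hac.le.trans ht.1, (ht.2.trans_le hw0.2).le⟩
                ⟨hac.le.trans ht1.1, (ht1.2.trans_le hw0.2).le⟩ h1 hlt ht1pos
              have := zero_unique2 w0 hw0 hw00 r
                ⟨ht.1.trans hr.1.le, (hr.2.trans ht1.2).le.trans hw0.2⟩ hr0
              linarith [hr.2, ht1.2]
            · linarith
            · obtain ⟨r, hr, hr0⟩ := ivt_zero hcont ⟨hac.le.trans ht1.1, (ht1.2.trans_le hw0.2).le⟩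
                ⟨hac.le.trans ht.1, (ht.2.trans_le hw0.2).le⟩ h1 ht1pos hlt
              have := zero_unique2 w0 hw0 hw00 r
                ⟨ht1.1.trans hr.1.le, (hr.2.trans ht.2).le.trans hw0.2⟩ hr0
              linarith [hr.2, ht.2]
          · have := zero_unique2 w0 hw0 hw00 t ⟨ht.1, (ht.2.trans_le hw0.2).le⟩ heq
            linarith [ht.2]
        have hmid : (c + w0) / 2 ∈ Ico c w0 := ⟨by linarith, by linarith⟩
        have hsm : StrictMonoOn f' (Icc c w0) :=
          strictF' c w0 hac.le hw0.2 (fun t ht => hposall t ⟨ht.1.le, ht.2⟩)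
        have h1 : f' c < f' ((c + w0) / 2) :=
          hsm ⟨le_rfl, hcw0.le⟩ ⟨hmid.1, hmid.2.le⟩ (by linarith)
        rw [hc0] at h1
        have := fnneg ((c + w0) / 2) ⟨by linarith, lt_of_lt_of_le hmid.2 hw0.2⟩
        linarith
      by_cases hpos2 : ∀ t ∈ Ioc w0 b, 0 ≤ f'' t
      · refine ⟨w0, hw0.1, hw0.2, ?_,
          monoF' w0 b (hac.le.trans hw0.1) le_rfl (fun t ht => hpos2 t ⟨ht.1, ht.2.le⟩)⟩
        intro t ht
        rcases eq_or_lt_of_le ht.2 with rfl | h'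
        · exact le_of_eq hw00
        · exact hnp t ⟨ht.1, h'⟩
      · push_neg at hpos2
        obtain ⟨t2, ht2, ht2neg⟩ := hpos2
        have hallnp : ∀ t ∈ Icc c b, f'' t ≤ 0 := by
          intro t ht
          by_contra hgt
          push_neg at hgt
          rcases le_or_gt t w0 with h1 | h1
          · rcases eq_or_lt_of_le h1 with rfl | h1'
            · linarith [hw00]
            · have := hnp t ⟨ht.1, h1'⟩
              linarith
          · rcases lt_trichotomy t t2 with h2 | rfl | h2
            · obtain ⟨r, hr, hr0⟩ := ivt_zero hcont ⟨hac.le.trans ht.1, ht.2⟩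
                ⟨hac.le.trans (hw0.1.trans ht2.1.le), ht2.2⟩ h2 hgt ht2neg
              have := zero_unique2 w0 hw0 hw00 r
                ⟨ht.1.trans hr.1.le, hr.2.le.trans ht2.2⟩ hr0
              linarith [hr.1, h1]
            · linarith
            · obtain ⟨r, hr, hr0⟩ := ivt_zero' hcont ⟨hac.le.trans (hw0.1.trans ht2.1.le), ht2.2⟩
                ⟨hac.le.trans ht.1, ht.2⟩ h2 ht2neg hgt
              have := zero_unique2 w0 hw0 hw00 r
                ⟨(hw0.1.trans ht2.1.le).trans hr.1.le, hr.2.le.trans ht.2⟩ hr0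
              linarith [hr.1, ht2.1]
        exact ⟨b, hcb.le, le_rfl, fun t ht => hallnp t ht, monoIccSelf b⟩
    · push_neg at hex
      have hallneg : ∀ t ∈ Icc c b, f'' t < 0 := by
        intro t ht
        by_contra hnn
        push_neg at hnn
        have htpos : 0 < f'' t := hnn.lt_of_ne (fun h => hex t ht h.symm)
        have hallpos : ∀ s ∈ Icc c b, 0 < f'' s := by
          intro s hs
          by_contra hle
          push_neg at hle
          rcases hle.lt_or_eq with hlt | heq
          · rcases lt_trichotomy s t with h1 | rfl | h1
            · obtain ⟨r, hr, hr0⟩ := ivt_zero' hcont ⟨hac.le.trans hs.1, hs.2⟩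
                ⟨hac.le.trans ht.1, ht.2⟩ h1 hlt htpos
              exact hex r ⟨hs.1.trans hr.1.le, hr.2.le.trans ht.2⟩ hr0
            · linarith
            · obtain ⟨r, hr, hr0⟩ := ivt_zero hcont ⟨hac.le.trans ht.1, ht.2⟩
                ⟨hac.le.trans hs.1, hs.2⟩ h1 htpos hlt
              exact hex r ⟨ht.1.trans hr.1.le, hr.2.le.trans hs.2⟩ hr0
          · exact hex s hs heq
        have hsm : StrictMonoOn f' (Icc c b) :=
          strictF' c b hac.le le_rfl (fun s hs => hallpos s ⟨hs.1.le, hs.2.le⟩)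
        have h1 : f' c < f' b := hsm ⟨le_rfl, hcb.le⟩ ⟨hcb.le, le_rfl⟩ hcb
        rw [hc0] at h1
        linarith
      exact ⟨b, hcb.le, le_rfl, fun t ht => (hallneg t ht).le, monoIccSelf b⟩
  -- min point of f'' on [z, w]
  have hzw : z ≤ w := hzc.trans hcw
  have hnpzw : ∀ t ∈ Icc z w, f'' t ≤ 0 := by
    intro t ht
    rcases le_total t c with h | h
    · exact hznp t ⟨ht.1, h⟩
    · exact hwnp t ⟨h, ht.2⟩
  obtain ⟨m, hm, hmin⟩ := isCompact_Icc.exists_isMinOn (nonempty_Icc.2 hzw)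
    (hcont.mono (Icc_subset_Icc haz hwb))
  rw [isMinOn_iff] at hmin
  have hzm : z ≤ m := hm.1
  have hmw : m ≤ w := hm.2
  have ham : a ≤ m := haz.trans hzm
  have hanti : AntitoneOn f'' (Icc z m) := by
    intro s hs t ht hst
    by_contra hcon
    push_neg at hcon
    have hst' : s < t := hst.lt_of_ne (fun h => by rw [h] at hcon; exact lt_irrefl _ hcon)
    obtain ⟨p, hp, hpmax⟩ := isCompact_Icc.exists_isMaxOn (nonempty_Icc.2 (hs.2 : s ≤ m))
      (hcont.mono (Icc_subset_Icc (haz.trans hs.1) (hmw.trans hwb)))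
    rw [isMaxOn_iff] at hpmax
    have h1 : f'' t ≤ f'' p := hpmax t ⟨hst, ht.2⟩
    have h2 : f'' m ≤ f'' s := hmin s ⟨hs.1, hs.2.trans hmw⟩
    have hps : s < p := lt_of_le_of_ne hp.1 (fun h => by rw [← h] at h1; linarith)
    have hpm : p < m := lt_of_le_of_ne hp.2 (fun h => by rw [h] at h1; linarith)
    have hpab : p ∈ Ioo a b := ⟨(haz.trans hs.1).trans_lt hps, hpm.trans_le (hmw.trans hwb)⟩
    have hloc : IsLocalMaxOn f'' (Ioo a b) p := by
      have h3 : Ioo s m ∈ nhdsWithin p (Ioo a b) :=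
        mem_nhdsWithin_of_mem_nhds (isOpen_Ioo.mem_nhds ⟨hps, hpm⟩)
      exact Filter.eventually_of_mem h3 (fun y hy => hpmax y (Ioo_subset_Icc_self hy))
    have h4 := he2 p hpab hloc
    have h5 : f'' p ≤ 0 := hnpzw p ⟨hs.1.trans hps.le, hpm.le.trans hmw⟩
    linarith
  have hmono2 : MonotoneOn f'' (Icc m w) := by
    intro s hs t ht hst
    by_contra hcon
    push_neg at hcon
    have hst' : s < t := hst.lt_of_ne (fun h => by rw [h] at hcon; exact lt_irrefl _ hcon)
    obtain ⟨p, hp, hpmax⟩ := isCompact_Icc.exists_isMaxOn (nonempty_Icc.2 (ht.1 : m ≤ t))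
      (hcont.mono (Icc_subset_Icc ham (ht.2.trans hwb)))
    rw [isMaxOn_iff] at hpmax
    have h1 : f'' s ≤ f'' p := hpmax s ⟨hs.1, hst⟩
    have h2 : f'' m ≤ f'' t := hmin t ⟨hzm.trans ht.1, ht.2⟩
    have hmp : m < p := lt_of_le_of_ne hp.1 (fun h => by rw [← h] at h1; linarith)
    have hpt : p < t := lt_of_le_of_ne hp.2 (fun h => by rw [h] at h1; linarith)
    have hpab : p ∈ Ioo a b := ⟨ham.trans_lt hmp, hpt.trans_le (ht.2.trans hwb)⟩
    have hloc : IsLocalMaxOn f'' (Ioo a b) p := by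
      have h3 : Ioo m t ∈ nhdsWithin p (Ioo a b) :=
        mem_nhdsWithin_of_mem_nhds (isOpen_Ioo.mem_nhds ⟨hmp, hpt⟩)
      exact Filter.eventually_of_mem h3 (fun y hy => hpmax y (Ioo_subset_Icc_self hy))
    have h4 := he2 p hpab hloc
    have h5 : f'' p ≤ 0 := hnpzw p ⟨hzm.trans hmp.le, hpt.le.trans ht.2⟩
    linarith
  -- concavity / convexity of f'
  have hconc : ConcaveOn ℝ (Icc z m) f' := by
    apply AntitoneOn.concaveOn_of_deriv (convex_Icc z m)
      (contf'.mono (Icc_subset_Icc haz (hmw.trans hwb)))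
    · intro t ht
      rw [interior_Icc] at ht
      exact (hf'd t ⟨haz.trans_lt ht.1,
        ht.2.trans_le (hmw.trans hwb)⟩).differentiableAt.differentiableWithinAt
    · rw [interior_Icc]
      intro s hs t ht hst
      rw [(hf'd s ⟨haz.trans_lt hs.1, hs.2.trans_le (hmw.trans hwb)⟩).deriv,
        (hf'd t ⟨haz.trans_lt ht.1, ht.2.trans_le (hmw.trans hwb)⟩).deriv]
      exact hanti (Ioo_subset_Icc_self hs) (Ioo_subset_Icc_self ht) hst
  have hconv : ConvexOn ℝ (Icc m w) f' := by
    apply MonotoneOn.convexOn_of_deriv (convex_Icc m w)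
      (contf'.mono (Icc_subset_Icc ham hwb))
    · intro t ht
      rw [interior_Icc] at ht
      exact (hf'd t ⟨ham.trans_lt ht.1, ht.2.trans_le hwb⟩).differentiableAt.differentiableWithinAt
    · rw [interior_Icc]
      intro s hs t ht hst
      rw [(hf'd s ⟨ham.trans_lt hs.1, hs.2.trans_le hwb⟩).deriv,
        (hf'd t ⟨ham.trans_lt ht.1, ht.2.trans_le hwb⟩).deriv]
      exact hmono2 (Ioo_subset_Icc_self hs) (Ioo_subset_Icc_self ht) hst
  -- basic quantities
  have hfz_ge : d ≤ f' z := hzmono ⟨le_rfl, haz⟩ ⟨haz, le_rfl⟩ haz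
  have hfw_le : f' w ≤ -d := by
    have := hwmono ⟨le_rfl, hwb⟩ ⟨hwb, le_rfl⟩ hwb
    rwa [hfb'] at this
  have hwc : c < w := by
    rcases eq_or_lt_of_le hcw with rfl | h
    · rw [hc0] at hfw_le; linarith
    · exact h
  have hwc' : (0:ℝ) < w - c := by linarith
  obtain ⟨E, hEdef⟩ : ∃ E, E = -f' w := ⟨-f' w, rfl⟩
  have hE : d ≤ E := by rw [hEdef]; linarith
  have hfw' : f' w = -E := by rw [hEdef, neg_neg]
  -- growth on [a, z]
  have prez : ∀ x ∈ Icc a z, d * (x - a) ≤ f x := by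
    intro x hx
    have hxb : x ≤ b := (hx.2.trans hzc).trans hcb.le
    have h := int_lb (u := a) (v := x) hx.1
      (contf.mono (Icc_subset_Icc le_rfl hxb))
      (contf'.mono (Icc_subset_Icc le_rfl hxb))
      (fun t ht => hfd t ⟨ht.1, ht.2.trans_le hxb⟩)
      (fun t ht => hzmono ⟨le_rfl, haz⟩ ⟨ht.1, ht.2.trans hx.2⟩ ht.1)
    rw [hfa] at h
    linarith
  have hfz : d * (z - a) ≤ f z := prez z ⟨haz, le_rfl⟩
  have hfw_ge : d * (b - w) ≤ f w := by
    have h := int_ub (u := w) (v := b) hwb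
      (contf.mono (Icc_subset_Icc (hac.le.trans hcw) le_rfl))
      (contf'.mono (Icc_subset_Icc (hac.le.trans hcw) le_rfl))
      (fun t ht => hfd t ⟨(hac.le.trans hcw).trans_lt ht.1, ht.2⟩)
      (K := -d) (fun t ht => by
        have h2 := hwmono ⟨ht.1, ht.2⟩ ⟨hwb, le_rfl⟩ ht.2
        rwa [hfb'] at h2)
    rw [hfb] at h
    nlinarith [h]
  -- case A estimate
  have caseA : ∀ x, z < x → x ≤ m → x ≤ c → d * (z - a) + d * (x - z) / 2 ≤ f x := by
    intro x hzx hxm hxc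
    have hxb : x ≤ b := hxc.trans hcb.le
    have hxz : (0:ℝ) < x - z := by linarith
    have hchord : ∀ t ∈ Icc z x, x * d / (x - z) + (-(d / (x - z))) * t ≤ f' t := by
      intro t ht
      have hmemz : z ∈ Icc z m := ⟨le_rfl, hzm⟩
      have hmemx : x ∈ Icc z m := ⟨hzx.le, hxm⟩
      have hA : (0:ℝ) ≤ (x - t) / (x - z) := div_nonneg (by linarith [ht.2]) hxz.le
      have hB : (0:ℝ) ≤ (t - z) / (x - z) := div_nonneg (by linarith [ht.1]) hxz.le
      have hsum : (x - t) / (x - z) + (t - z) / (x - z) = 1 := by field_simp; ring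
      have h1 := hconc.2 hmemz hmemx hA hB hsum
      have harg : ((x - t) / (x - z)) • z + ((t - z) / (x - z)) • x = t := by
        simp only [smul_eq_mul]
        field_simp
        ring
      rw [harg] at h1
      simp only [smul_eq_mul] at h1
      have h2 : (x - t) / (x - z) * d ≤ (x - t) / (x - z) * f' z :=
        mul_le_mul_of_nonneg_left hfz_ge hA
      have h3 : 0 ≤ (t - z) / (x - z) * f' x :=
        mul_nonneg hB (fpnonneg x ⟨haz.trans hzx.le, hxc⟩)
      have h4 : x * d / (x - z) + (-(d / (x - z))) * t = (x - t) / (x - z) * d := by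
        field_simp
        ring
      rw [h4]
      linarith
    have h := int_lb_lin (u := z) (v := x) hzx.le
      (contf.mono (Icc_subset_Icc haz hxb))
      (contf'.mono (Icc_subset_Icc haz hxb))
      (fun t ht => hfd t ⟨haz.trans_lt ht.1, ht.2.trans_le hxb⟩) hchord
    have h5 : x * d / (x - z) * (x - z) + -(d / (x - z)) * (x ^ 2 - z ^ 2) / 2
        = d * (x - z) / 2 := by
      field_simp
      ring
    rw [h5] at h
    linarith
  -- final case analysis
  intro x hx hxc
  have hax : a < x := hx.1
  have hxb : x ≤ b := hxc.trans hcb.le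
  suffices h : (x - a) / 10 ≤ f x by linarith
  rcases le_or_gt x z with hxz | hzx
  · have h1 := prez x ⟨hax.le, hxz⟩
    nlinarith [h1, hd1', sub_pos.mpr hax]
  rcases le_or_gt x m with hxm | hmx
  · have h1 := caseA x hzx hxm hxc
    nlinarith [h1, hd1', sub_nonneg.mpr haz, sub_pos.mpr hzx]
  -- case B : m < x ≤ c
  have hmc : m < c := hmx.trans_le hxc
  have hfm_ge : d * (z - a) + d * (m - z) / 2 ≤ f m := by
    rcases eq_or_lt_of_le hzm with rfl | h
    · simpa using hfz
    · exact caseA m h le_rfl hmc.le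
  have chordB : ∀ t ∈ Icc m c, E * (c - t) / (w - c) ≤ f' t := by
    intro t ht
    rcases eq_or_lt_of_le ht.2 with rfl | htc
    · simp [hc0]
    · have hwt : (0:ℝ) < w - t := by linarith
      have hmemt : t ∈ Icc m w := ⟨ht.1, ht.2.trans hcw⟩
      have hmemw : w ∈ Icc m w := ⟨hmw, le_rfl⟩
      have hA : (0:ℝ) ≤ (w - c) / (w - t) := div_nonneg hwc'.le hwt.le
      have hB : (0:ℝ) ≤ (c - t) / (w - t) := div_nonneg (by linarith) hwt.le
      have hsum : (w - c) / (w - t) + (c - t) / (w - t) = 1 := by field_simp; ring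
      have h1 := hconv.2 hmemt hmemw hA hB hsum
      have harg : ((w - c) / (w - t)) • t + ((c - t) / (w - t)) • w = c := by
        simp only [smul_eq_mul]
        field_simp
        ring
      rw [harg, hc0] at h1
      simp only [smul_eq_mul] at h1
      have h2 : (w - c) / (w - t) * f' t + (c - t) / (w - t) * f' w
          = ((w - c) * f' t + (c - t) * f' w) / (w - t) := by ring
      rw [h2] at h1
      have h3 : 0 ≤ (w - c) * f' t + (c - t) * f' w := by
        rcases div_nonneg_iff.mp h1 with ⟨h4, _⟩ | ⟨_, h4⟩
        · exact h4
        · linarith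
      rw [hfw'] at h3
      rw [div_le_iff₀ hwc']
      nlinarith [h3]
  have chordC : ∀ t ∈ Icc c w, f' t ≤ E * c / (w - c) + (-(E / (w - c))) * t := by
    intro t ht
    have hmemc : c ∈ Icc m w := ⟨hmc.le, hcw⟩
    have hmemw : w ∈ Icc m w := ⟨hmw, le_rfl⟩
    have hA : (0:ℝ) ≤ (w - t) / (w - c) := div_nonneg (by linarith [ht.2]) hwc'.le
    have hB : (0:ℝ) ≤ (t - c) / (w - c) := div_nonneg (by linarith [ht.1]) hwc'.le
    have hsum : (w - t) / (w - c) + (t - c) / (w - c) = 1 := by field_simp; ring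
    have h1 := hconv.2 hmemc hmemw hA hB hsum
    have harg : ((w - t) / (w - c)) • c + ((t - c) / (w - c)) • w = t := by
      simp only [smul_eq_mul]
      field_simp
      ring
    rw [harg, hc0] at h1
    simp only [smul_eq_mul] at h1
    rw [hfw'] at h1
    have h2 : (w - t) / (w - c) * 0 + (t - c) / (w - c) * -E
        = E * c / (w - c) + (-(E / (w - c))) * t := by
      field_simp
      ring
    rw [h2] at h1
    exact h1
  have hfc_ge : f w + E * (w - c) / 2 ≤ f c := by
    have h := int_ub_lin (u := c) (v := w) hcw
      (contf.mono (Icc_subset_Icc hac.le hwb))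
      (contf'.mono (Icc_subset_Icc hac.le hwb))
      (fun t ht => hfd t ⟨hac.trans ht.1, ht.2.trans_le hwb⟩) chordC
    have h5 : E * c / (w - c) * (w - c) + -(E / (w - c)) * (w ^ 2 - c ^ 2) / 2
        = -(E * (w - c) / 2) := by
      field_simp
      ring
    rw [h5] at h
    linarith
  rcases le_or_gt ((w - c) / 5) (2 * c - m - x) with hBi | hBii
  · -- case B-i
    have h := int_lb_lin (u := m) (v := x) hmx.le
      (contf.mono (Icc_subset_Icc ham hxb))
      (contf'.mono (Icc_subset_Icc ham hxb))
      (fun t ht => hfd t ⟨ham.trans_lt ht.1, ht.2.trans_le hxb⟩)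
      (A := E * c / (w - c)) (B := -(E / (w - c)))
      (fun t ht => by
        have h1 := chordB t ⟨ht.1, ht.2.trans hxc⟩
        have h2 : E * c / (w - c) + -(E / (w - c)) * t = E * (c - t) / (w - c) := by
          field_simp
          ring
        rw [h2]
        exact h1)
    have h5 : E * c / (w - c) * (x - m) + -(E / (w - c)) * (x ^ 2 - m ^ 2) / 2
        = E * ((x - m) * (2 * c - m - x)) / (2 * (w - c)) := by
      field_simp
      ring
    rw [h5] at h
    have hxm0 : (0:ℝ) < x - m := sub_pos.mpr hmx
    have h6 : (x - m) / 10 ≤ E * ((x - m) * (2 * c - m - x)) / (2 * (w - c)) := by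
      rw [div_le_div_iff₀ (by norm_num) (by linarith)]
      have hQ1 : (x - m) * ((w - c) / 5) ≤ (x - m) * (2 * c - m - x) :=
        mul_le_mul_of_nonneg_left hBi hxm0.le
      have hQpos : 0 ≤ (x - m) * (2 * c - m - x) := le_trans (by positivity) hQ1
      have hEQ : 1 * ((x - m) * (2 * c - m - x)) ≤ E * ((x - m) * (2 * c - m - x)) :=
        mul_le_mul_of_nonneg_right (hd1'.trans hE) hQpos
      have hone : (x - m) * (2 * (w - c)) = 10 * ((x - m) * ((w - c) / 5)) := by ring
      linarith
    nlinarith [hfm_ge, h, h6, hd1', sub_nonneg.mpr haz, sub_nonneg.mpr hzm]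
  · -- case B-ii
    have hcm : (0:ℝ) < c - m := by linarith
    have hcm5 : c - m < (w - c) / 5 := by
      have hcx : (0:ℝ) ≤ c - x := by linarith
      linarith
    have hantimc : AntitoneOn f' (Icc m c) :=
      antiF' m c ham hcb.le (fun t ht => hznp t ⟨hzm.trans ht.1.le, ht.2.le⟩)
    have hfx_nonneg : 0 ≤ f' x := fpnonneg x ⟨ham.trans hmx.le, hxc⟩
    have h_up : f' x * (x - m) ≤ f x - f m := by
      have h1 := int_lb (u := m) (v := x) hmx.le
        (contf.mono (Icc_subset_Icc ham hxb))
        (contf'.mono (Icc_subset_Icc ham hxb))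
        (fun t ht => hfd t ⟨ham.trans_lt ht.1, ht.2.trans_le hxb⟩)
        (K := f' x) (fun t ht => hantimc ⟨ht.1, ht.2.trans hxc⟩ ⟨hmx.le, hxc⟩ ht.2)
      linarith
    have h_dn : f c - f x ≤ f' x * (c - x) := by
      have h1 := int_ub (u := x) (v := c) hxc
        (contf.mono (Icc_subset_Icc hax.le hcb.le))
        (contf'.mono (Icc_subset_Icc hax.le hcb.le))
        (fun t ht => hfd t ⟨hax.trans ht.1, ht.2.trans_le hcb.le⟩)
        (K := f' x) (fun t ht => hantimc ⟨hmx.le, hxc⟩ ⟨hmx.le.trans ht.1, ht.2⟩ ht.1)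
      linarith
    have hfm_nonneg : 0 ≤ f m := by
      nlinarith [hfm_ge, hd1', sub_nonneg.mpr haz, sub_nonneg.mpr hzm]
    have hfw_nonneg : 0 ≤ f w := by
      nlinarith [hfw_ge, hd1', sub_nonneg.mpr hwb]
    have hxm0 : (0:ℝ) < x - m := sub_pos.mpr hmx
    have hkey : E * (w - c) * (x - m) / 2 ≤ f x * (c - m) := by
      have h1 : E * (w - c) / 2 ≤ f x + f' x * (c - x) := by linarith [hfc_ge, h_dn, hfw_nonneg]
      have h2 : f' x * (x - m) ≤ f x := by linarith [h_up, hfm_nonneg]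
      have hA := mul_le_mul_of_nonneg_right h1 hxm0.le
      have hB0 := mul_le_mul_of_nonneg_left h2 (sub_nonneg.mpr hxc)
      have e1 : (c - x) * (f' x * (x - m)) = f' x * (c - x) * (x - m) := by ring
      have e2 : (E * (w - c) / 2) * (x - m) = E * (w - c) * (x - m) / 2 := by ring
      have e3 : (f x + f' x * (c - x)) * (x - m)
          = f x * (x - m) + f' x * (c - x) * (x - m) := by ring
      have e4 : f x * (x - m) + (c - x) * f x = f x * (c - m) := by ring
      linarith
    rcases le_or_gt (x - m) (4 * (m - a)) with hα | hβ
    · have p1 : 1 * (z - a) ≤ d * (z - a) :=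
        mul_le_mul_of_nonneg_right hd1' (sub_nonneg.mpr haz)
      have p2 : 1 * (m - z) ≤ d * (m - z) :=
        mul_le_mul_of_nonneg_right hd1' (sub_nonneg.mpr hzm)
      have hfm2 : (m - a) / 2 ≤ f m := by linarith
      have p3 := mul_nonneg hfx_nonneg hxm0.le
      have hfxm : f m ≤ f x := by linarith
      linarith
    · have q1 : 1 * (w - c) ≤ E * (w - c) :=
        mul_le_mul_of_nonneg_right (hd1'.trans hE) hwc'.le
      have q2 : 1 * (w - c) * (x - m) ≤ E * (w - c) * (x - m) :=
        mul_le_mul_of_nonneg_right q1 hxm0.le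
      have q3 : 5 * (c - m) * (x - m) ≤ (w - c) * (x - m) :=
        mul_le_mul_of_nonneg_right (by linarith : 5 * (c - m) ≤ w - c) hxm0.le
      have q4 : 1 * (w - c) * (x - m) = (w - c) * (x - m) := by ring
      have h7 : 5 * (c - m) * (x - m) / 2 ≤ f x * (c - m) := by linarith [hkey]
      have h8 : 5 * (x - m) / 2 ≤ f x := by
        apply le_of_mul_le_mul_right _ hcm
        have q5 : 5 * (x - m) / 2 * (c - m) = 5 * (c - m) * (x - m) / 2 := by ring
        linarith
      linarith [hβ, h8]

/-- The positive case: if `f'(a) > 0` then the bound holds (without absolute values). -/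
private lemma posCase (a b c : ℝ) (f f' f'' : ℝ → ℝ) (hab : a < b)
    (hderiv1 : ∀ x ∈ Icc a b, HasDerivWithinAt f (f' x) (Icc a b) x)
    (hderiv2 : ∀ x ∈ Icc a b, HasDerivWithinAt f' (f'' x) (Icc a b) x)
    (hcont : ContinuousOn f'' (Icc a b))
    (hfa : f a = 0) (hfb : f b = 0)
    (hfab : |f' a| = |f' b|) (hfa1 : 1 ≤ |f' a|)
    (hc : c ∈ Ioo a b) (hc0 : f' c = 0)
    (hcuniq : ∀ x ∈ Ioo a b, f' x = 0 → x = c)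
    (hd1 : {x | x ∈ Icc a c ∧ f'' x = 0}.Subsingleton)
    (hd2 : {x | x ∈ Icc c b ∧ f'' x = 0}.Subsingleton)
    (he2 : ∀ x ∈ Ioo a b, IsLocalMaxOn f'' (Ioo a b) x → 0 < f'' x)
    (hpos : 0 < f' a) :
    ∀ x ∈ Ioo a b, min (x - a) (b - x) / 20 < f x := by
  have hcore := core a b c f f' f'' hab hderiv1 hderiv2 hcont hfa hfb hfab hfa1 hc hc0
    hcuniq hd1 hd2 he2 hpos
  have hfpb : f' b < 0 := fpb_neg a b c f f' f'' hab hderiv1 hderiv2 hfa hfb hfab hfa1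
    hc hc0 hcuniq hpos
  have hmaps : ∀ y ∈ Icc a b, a + b - y ∈ Icc a b := by
    rintro y ⟨h1, h2⟩
    exact ⟨by linarith, by linarith⟩
  have hrefld : ∀ y ∈ Icc a b, HasDerivWithinAt (fun u : ℝ => a + b - u) (-1 : ℝ) (Icc a b) y := by
    intro y _
    simpa using (hasDerivWithinAt_id y (Icc a b)).const_sub (a + b)
  have hgd1 : ∀ y ∈ Icc a b,
      HasDerivWithinAt (fun u => f (a + b - u)) (-f' (a + b - y)) (Icc a b) y := by
    intro y hy
    have h3 := HasDerivWithinAt.comp y (hderiv1 _ (hmaps y hy)) (hrefld y hy)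
      (fun u hu => hmaps u hu)
    simpa [Function.comp_def, mul_neg_one] using h3
  have hgd2 : ∀ y ∈ Icc a b,
      HasDerivWithinAt (fun u => -f' (a + b - u)) (f'' (a + b - y)) (Icc a b) y := by
    intro y hy
    have h3 := (HasDerivWithinAt.comp y (hderiv2 _ (hmaps y hy)) (hrefld y hy)
      (fun u hu => hmaps u hu)).neg
    simpa [Function.comp_def, Pi.neg_def, mul_neg_one] using h3
  have hcont2 : ContinuousOn (fun u => f'' (a + b - u)) (Icc a b) :=
    hcont.comp ((continuous_const.sub continuous_id).continuousOn) hmaps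
  have hrc : a + b - c ∈ Ioo a b := ⟨by linarith [hc.2], by linarith [hc.1]⟩
  have hcore2 := core a b (a + b - c) (fun u => f (a + b - u)) (fun u => -f' (a + b - u))
    (fun u => f'' (a + b - u)) hab hgd1 hgd2 hcont2
    (by show f (a + b - a) = 0; rw [show a + b - a = b by ring, hfb])
    (by show f (a + b - b) = 0; rw [show a + b - b = a by ring, hfa])
    (by show |(-f' (a + b - a))| = |(-f' (a + b - b))|
        rw [show a + b - a = b by ring, show a + b - b = a by ring, abs_neg, abs_neg, hfab])
    (by show (1:ℝ) ≤ |(-f' (a + b - a))|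
        rw [show a + b - a = b by ring, abs_neg, ← hfab]
        exact hfa1)
    hrc
    (by show -f' (a + b - (a + b - c)) = 0
        rw [show a + b - (a + b - c) = c by ring, hc0, neg_zero])
    (by intro y hy h0
        have h1 : f' (a + b - y) = 0 := by simpa using h0
        have h2 : a + b - y ∈ Ioo a b := ⟨by linarith [hy.2], by linarith [hy.1]⟩
        have h3 := hcuniq _ h2 h1
        linarith)
    (by intro u hu v hv
        have h3 := hd2 (show (a + b - u) ∈ {x | x ∈ Icc c b ∧ f'' x = 0} from
          ⟨⟨by linarith [hu.1.2], by linarith [hu.1.1]⟩, hu.2⟩)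
          (show (a + b - v) ∈ {x | x ∈ Icc c b ∧ f'' x = 0} from
          ⟨⟨by linarith [hv.1.2], by linarith [hv.1.1]⟩, hv.2⟩)
        linarith)
    (by intro u hu v hv
        have h3 := hd1 (show (a + b - u) ∈ {x | x ∈ Icc a c ∧ f'' x = 0} from
          ⟨⟨by linarith [hu.1.2], by linarith [hu.1.1]⟩, hu.2⟩)
          (show (a + b - v) ∈ {x | x ∈ Icc a c ∧ f'' x = 0} from
          ⟨⟨by linarith [hv.1.2], by linarith [hv.1.1]⟩, hv.2⟩)
        linarith)
    (by intro y hy hmax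
        have h2 : a + b - y ∈ Ioo a b := ⟨by linarith [hy.2], by linarith [hy.1]⟩
        exact he2 _ h2 (reflect_isLocalMax hmax))
    (by show 0 < -f' (a + b - a)
        rw [show a + b - a = b by ring]
        linarith)
  intro x hx
  rcases le_total x c with hxc | hcx
  · have h1 := hcore x hx hxc
    have h2 : min (x - a) (b - x) ≤ x - a := min_le_left _ _
    linarith
  · have hy : a + b - x ∈ Ioo a b := ⟨by linarith [hx.2], by linarith [hx.1]⟩
    have h1 := hcore2 (a + b - x) hy (by linarith)
    have h1' : (b - x) / 20 < f x := by
      have e : a + b - (a + b - x) = x := by ring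
      have e2 : (a + b - x) - a = b - x := by ring
      calc (b - x) / 20 = ((a + b - x) - a) / 20 := by rw [e2]
        _ < f (a + b - (a + b - x)) := h1
        _ = f x := by rw [e]
    have h2 : min (x - a) (b - x) ≤ b - x := min_le_right _ _
    linarith

end Stmt6Aux

/-- Lemma on `C²` functions on `[a,b]`: under conditions (a)–(e), the function
satisfies `|f(x)| > min{x−a, b−x}/20` on `(a,b)`. Here `f'` and `f''` are the first
and second (one-sided at the endpoints) derivatives of `f` on `[a,b]`. -/
theorem stmt6 (a b c : ℝ) (f f' f'' : ℝ → ℝ) (hab : a < b)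
    (hderiv1 : ∀ x ∈ Icc a b, HasDerivWithinAt f (f' x) (Icc a b) x)
    (hderiv2 : ∀ x ∈ Icc a b, HasDerivWithinAt f' (f'' x) (Icc a b) x)
    (hcont : ContinuousOn f'' (Icc a b))
    (hfa : f a = 0) (hfb : f b = 0)
    (hfab : |f' a| = |f' b|) (hfa1 : 1 ≤ |f' a|)
    (hc : c ∈ Ioo a b) (hc0 : f' c = 0)
    (hcuniq : ∀ x ∈ Ioo a b, f' x = 0 → x = c)
    (hd1 : {x | x ∈ Icc a c ∧ f'' x = 0}.Subsingleton)
    (hd2 : {x | x ∈ Icc c b ∧ f'' x = 0}.Subsingleton)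
    (he1 : ∀ x ∈ Ioo a b, IsLocalMinOn f'' (Ioo a b) x → f'' x < 0)
    (he2 : ∀ x ∈ Ioo a b, IsLocalMaxOn f'' (Ioo a b) x → 0 < f'' x) :
    ∀ x ∈ Ioo a b, min (x - a) (b - x) / 20 < |f x| := by
  intro x hx
  rcases lt_or_ge 0 (f' a) with hp | hn
  · have h := Stmt6Aux.posCase a b c f f' f'' hab hderiv1 hderiv2 hcont hfa hfb hfab hfa1
      hc hc0 hcuniq hd1 hd2 he2 hp x hx
    exact lt_of_lt_of_le h (le_abs_self _)
  · have hne : f' a ≠ 0 := by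
      intro h
      rw [h, abs_zero] at hfa1
      linarith
    have hn' : f' a < 0 := hn.lt_of_ne hne
    have h := Stmt6Aux.posCase a b c (fun u => -f u) (fun u => -f' u) (fun u => -f'' u) hab
      (fun y hy => (hderiv1 y hy).neg) (fun y hy => (hderiv2 y hy).neg) hcont.neg
      (by simp [hfa]) (by simp [hfb]) (by simpa using hfab) (by simpa using hfa1)
      hc (by simp [hc0])
      (fun y hy h0 => hcuniq y hy (by simpa using h0))
      (by intro u hu v hv
          exact hd1 ⟨hu.1, by simpa using hu.2⟩ ⟨hv.1, by simpa using hv.2⟩)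
      (by intro u hu v hv
          exact hd2 ⟨hu.1, by simpa using hu.2⟩ ⟨hv.1, by simpa using hv.2⟩)
      (by intro y hy hmax
          have h2 : IsLocalMinOn f'' (Ioo a b) y := by simpa using hmax.neg
          have h3 := he1 y hy h2
          show (0:ℝ) < -f'' y
          linarith)
      (by show (0:ℝ) < -f' a; linarith)
      x hx
    have h4 : min (x - a) (b - x) / 20 < -f x := h
    exact lt_of_lt_of_le h4 (neg_le_abs _)
end

section
/- For every K > 0, the set C = {x + iy ∈ ℂ : x > 1 and |Re(e^{x+iy})| ≤ K} = {(x,y) ∈ ℝ² : x > 1 and e^{x}·|cos y| ≤ K} has finite logarithmic area; that is, ∫∫_{C} (x² + y²)^{−1} dx dy < ∞. -/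
open MeasureTheory

section auxiliary
open Set Real

noncomputable def g (y : ℝ) : ENNReal := ENNReal.ofReal (Real.sqrt (1/|Real.cos y|))

lemma g_meas : Measurable g := by
  apply Measurable.ennreal_ofReal
  exact (measurable_const.div Real.continuous_cos.measurable.abs).sqrt

lemma auxA : ∫⁻ y in Set.Icc (-(π/2)) (π/2), g y < ⊤ := by
  have hle : (-(π/2) : ℝ) ≤ π/2 := by linarith [pi_pos]
  set h : ℝ → ℝ := fun y => Real.sqrt (π/2) * ((π/2 - y) ^ (-(1:ℝ)/2) + (π/2 + y) ^ (-(1:ℝ)/2)) with hh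
  have hbase : IntervalIntegrable (fun x : ℝ => x ^ (-(1:ℝ)/2)) volume 0 π :=
    intervalIntegral.intervalIntegrable_rpow' (by norm_num)
  have h1 : IntervalIntegrable (fun y : ℝ => (π/2 - y) ^ (-(1:ℝ)/2)) volume (-(π/2)) (π/2) := by
    have h' := (hbase.comp_sub_left (π/2)).symm
    rwa [show π/2 - π = -(π/2) by ring, sub_zero] at h'
  have h2 : IntervalIntegrable (fun y : ℝ => (π/2 + y) ^ (-(1:ℝ)/2)) volume (-(π/2)) (π/2) := by
    have h' := hbase.comp_add_right (π/2)
    rw [zero_sub, show π - π/2 = π/2 by ring] at h'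
    simpa [add_comm] using h'
  have hint : IntegrableOn h (Set.Icc (-(π/2)) (π/2)) := by
    rw [← intervalIntegrable_iff_integrableOn_Icc_of_le hle]
    exact (h1.add h2).const_mul _
  have hnonneg : ∀ y ∈ Set.Icc (-(π/2)) (π/2), 0 ≤ h y := by
    intro y hy
    have t1 : (0:ℝ) ≤ π/2 - y := by linarith [hy.2]
    have t2 : (0:ℝ) ≤ π/2 + y := by linarith [hy.1]
    exact mul_nonneg (Real.sqrt_nonneg _)
      (add_nonneg (Real.rpow_nonneg t1 _) (Real.rpow_nonneg t2 _))
  have hptw : ∀ y ∈ Set.Icc (-(π/2)) (π/2), g y ≤ ENNReal.ofReal (h y) := by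
    intro y hy
    apply ENNReal.ofReal_le_ofReal
    rcases eq_or_lt_of_le (abs_le.2 ⟨hy.1, hy.2⟩ : |y| ≤ π/2) with heq | hlt
    · have hc : Real.cos y = 0 := by
        rcases abs_eq (le_of_lt (by positivity : (0:ℝ) < π/2)) |>.1 heq with h' | h'
        · rw [h']; exact Real.cos_pi_div_two
        · rw [h']; simpa using Real.cos_pi_div_two
      rw [hc]
      simpa using hnonneg y hy
    · have hypos : 0 < Real.cos y :=
        Real.cos_pos_of_mem_Ioo (Set.mem_Ioo.mpr ⟨(abs_lt.1 hlt).1, (abs_lt.1 hlt).2⟩)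
      have ht : (0:ℝ) < π/2 - |y| := by linarith
      have hjordan : 2/π * (π/2 - |y|) ≤ Real.cos y := by
        have := Real.mul_le_sin (le_of_lt ht) (by linarith [abs_nonneg y])
        rwa [Real.sin_pi_div_two_sub, Real.cos_abs] at this
      have key : Real.sqrt (1/|Real.cos y|) ≤ Real.sqrt (π/2) * (π/2 - |y|) ^ (-(1:ℝ)/2) := by
        have e1 : (π/2 - |y|) ^ (-(1:ℝ)/2) = Real.sqrt (1/(π/2 - |y|)) := by
          rw [show (-(1:ℝ)/2) = -(1/2) by norm_num, Real.rpow_neg ht.le, ← Real.sqrt_eq_rpow,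
            one_div, Real.sqrt_inv]
        rw [e1, ← Real.sqrt_mul (by positivity)]
        apply Real.sqrt_le_sqrt
        rw [abs_of_pos hypos, div_le_iff₀ hypos]
        have expand : π/2 * (1/(π/2-|y|)) * (2/π*(π/2-|y|)) ≤ π/2 * (1/(π/2 - |y|)) * Real.cos y :=
          mul_le_mul_of_nonneg_left hjordan (by positivity)
        have e2 : π/2 * (1/(π/2-|y|)) * (2/π*(π/2-|y|)) = 1 := by
          field_simp
          rw [div_eq_one_iff_eq (ne_of_gt (by nlinarith [Real.pi_pos]))]
        linarith
      have hB1 : (0:ℝ) ≤ Real.sqrt (π/2) * (π/2 + y) ^ (-(1:ℝ)/2) :=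
        mul_nonneg (Real.sqrt_nonneg _) (Real.rpow_nonneg (by linarith [hy.1]) _)
      have hB2 : (0:ℝ) ≤ Real.sqrt (π/2) * (π/2 - y) ^ (-(1:ℝ)/2) :=
        mul_nonneg (Real.sqrt_nonneg _) (Real.rpow_nonneg (by linarith [hy.2]) _)
      rcases le_or_gt 0 y with hy0 | hy0
      · rw [abs_of_nonneg hy0] at key
        refine key.trans ?_
        show _ ≤ Real.sqrt (π/2) * ((π/2 - y) ^ (-(1:ℝ)/2) + (π/2 + y) ^ (-(1:ℝ)/2))
        rw [mul_add]; linarith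
      · rw [abs_of_neg hy0, show π/2 - -y = π/2 + y by ring] at key
        refine key.trans ?_
        show _ ≤ Real.sqrt (π/2) * ((π/2 - y) ^ (-(1:ℝ)/2) + (π/2 + y) ^ (-(1:ℝ)/2))
        rw [mul_add]; linarith
  calc ∫⁻ y in Set.Icc (-(π/2)) (π/2), g y
      ≤ ∫⁻ y in Set.Icc (-(π/2)) (π/2), ENNReal.ofReal (h y) := by
        apply lintegral_mono_ae
        exact (ae_restrict_iff' measurableSet_Icc).2 (ae_of_all _ hptw)
    _ < ⊤ := by
        have hfi := hint.2
        rwa [hasFiniteIntegral_iff_ofReal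
          ((ae_restrict_iff' measurableSet_Icc).2 (ae_of_all _ hnonneg))] at hfi

lemma auxT (n : ℤ) : ∫⁻ y in Set.Icc ((n:ℝ)*π - π/2) ((n:ℝ)*π + π/2), g y
    = ∫⁻ y in Set.Icc (-(π/2)) (π/2), g y := by
  have habs : |(-1:ℝ)^n| = 1 := by
    rcases Int.even_or_odd n with he | ho
    · rw [he.neg_one_zpow, abs_one]
    · rw [ho.neg_one_zpow, abs_neg, abs_one]
  have hg : ∀ y : ℝ, g (y + n*π) = g y := by
    intro y
    unfold g
    rw [Real.cos_add_int_mul_pi, abs_mul, habs, one_mul]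
  rw [← lintegral_indicator measurableSet_Icc, ← lintegral_indicator measurableSet_Icc,
    ← MeasureTheory.lintegral_add_right_eq_self
      (fun y => Set.indicator (Set.Icc ((n:ℝ)*π - π/2) ((n:ℝ)*π + π/2)) g y) ((n:ℝ)*π)]
  congr 1; ext y
  have hmem : y + (n:ℝ)*π ∈ Set.Icc ((n:ℝ)*π - π/2) ((n:ℝ)*π + π/2) ↔
      y ∈ Set.Icc (-(π/2)) (π/2) := by
    simp only [Set.mem_Icc]
    constructor <;> (rintro ⟨a,b⟩; constructor <;> linarith)
  rw [Set.indicator_apply, Set.indicator_apply]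
  by_cases hmy : y ∈ Set.Icc (-(π/2)) (π/2)
  · rw [if_pos (hmem.2 hmy), if_pos hmy, hg]
  · rw [if_neg (fun c => hmy (hmem.1 c)), if_neg hmy]

lemma keyineq {m y : ℝ} (hm : 1 ≤ m) (hy : m*π - π/2 ≤ y) : 1 + m^2 ≤ 2*(1+y^2) := by
  have h3 : (3:ℝ) < π := Real.pi_gt_three
  have hy3 : 3*m - 3/2 ≤ y := by
    nlinarith [mul_nonneg (by linarith : (0:ℝ) ≤ π - 3) (by linarith : (0:ℝ) ≤ m - 1/2)]
  have hpos : (0:ℝ) ≤ 3*m - 3/2 := by linarith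
  have hsq : (3*m - 3/2)^2 ≤ y^2 := by nlinarith
  nlinarith [sq_nonneg (m - 1)]

lemma sumb : Summable (fun n : ℤ => 2/(1+(n:ℝ)^2)) := by
  have hnat : Summable (fun n : ℕ => 2/(1+(n:ℝ)^2)) := by
    have base : Summable (fun n : ℕ => 4 * (1/((n:ℝ))^2)) :=
      (summable_one_div_nat_pow.mpr one_lt_two).mul_left 4
    have base1 : Summable (fun n : ℕ => 4 * (1/(((n:ℝ))+1)^2)) := by
      have := (summable_nat_add_iff 1).mpr base
      simpa using this
    apply base1.of_nonneg_of_le (fun n => by positivity) (fun n => ?_)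
    rw [mul_one_div, div_le_div_iff₀ (by positivity) (by positivity)]
    nlinarith [sq_nonneg ((n:ℝ) - 1)]
  apply Summable.of_nat_of_neg
  · simpa using hnat
  · simpa using hnat

lemma auxC : ∫⁻ y, ENNReal.ofReal (1/(1+y^2)) * g y ∂volume < ⊤ := by
  set F : ℝ → ENNReal := fun y => ENNReal.ofReal (1/(1+y^2)) * g y with hF
  have hcover : (Set.univ : Set ℝ) ⊆
      ⋃ n : ℤ, Set.Icc ((n:ℝ)*π - π/2) ((n:ℝ)*π + π/2) := by
    intro y _
    refine Set.mem_iUnion.2 ⟨round (y/π), ?_⟩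
    have h1 := abs_sub_round (y/π)
    have hπ := Real.pi_pos
    have h2 := (abs_le.1 h1).1
    have h3 := (abs_le.1 h1).2
    have e : (y/π - (round (y/π) : ℝ))*π = y - (round (y/π) : ℝ)*π := by field_simp
    have h2' := mul_le_mul_of_nonneg_right h2 hπ.le
    have h3' := mul_le_mul_of_nonneg_right h3 hπ.le
    rw [Set.mem_Icc]
    constructor <;> nlinarith
  have hbound : ∀ n : ℤ, ∀ y ∈ Set.Icc ((n:ℝ)*π - π/2) ((n:ℝ)*π + π/2),
      (1:ℝ)/(1+y^2) ≤ 2/(1+(n:ℝ)^2) := by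
    intro n y hy
    rw [div_le_div_iff₀ (by positivity) (by positivity)]
    have : 1 + (n:ℝ)^2 ≤ 2*(1+y^2) := by
      rcases lt_trichotomy n 0 with hn | hn | hn
      · have hm : (1:ℝ) ≤ -(n:ℝ) := by
          have : ((n:ℝ)) ≤ -1 := by exact_mod_cast (by omega : (n:ℤ) ≤ -1)
          linarith
        have := keyineq hm (y := -y) (by nlinarith [hy.2])
        nlinarith
      · subst hn; simp only [Int.cast_zero]; nlinarith [sq_nonneg y]
      · have hm : (1:ℝ) ≤ (n:ℝ) := by exact_mod_cast hn
        have := keyineq hm (y := y) (by nlinarith [hy.1])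
        nlinarith
    linarith
  calc ∫⁻ y, F y ∂volume = ∫⁻ y in Set.univ, F y ∂volume := (setLIntegral_univ F).symm
    _ ≤ ∫⁻ y in ⋃ n : ℤ, Set.Icc ((n:ℝ)*π - π/2) ((n:ℝ)*π + π/2), F y ∂volume :=
        lintegral_mono' (Measure.restrict_mono hcover le_rfl) le_rfl
    _ ≤ ∑' n : ℤ, ∫⁻ y in Set.Icc ((n:ℝ)*π - π/2) ((n:ℝ)*π + π/2), F y ∂volume :=
        lintegral_iUnion_le _ _
    _ ≤ ∑' n : ℤ, ENNReal.ofReal (2/(1+(n:ℝ)^2)) * ∫⁻ y in Set.Icc (-(π/2)) (π/2), g y := by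
        apply ENNReal.tsum_le_tsum
        intro n
        calc ∫⁻ y in Set.Icc ((n:ℝ)*π - π/2) ((n:ℝ)*π + π/2), F y ∂volume
            ≤ ∫⁻ y in Set.Icc ((n:ℝ)*π - π/2) ((n:ℝ)*π + π/2),
                ENNReal.ofReal (2/(1+(n:ℝ)^2)) * g y ∂volume := by
              apply lintegral_mono_ae
              rw [ae_restrict_iff' measurableSet_Icc]
              apply ae_of_all
              intro y hy
              exact mul_le_mul_left (ENNReal.ofReal_le_ofReal (hbound n y hy)) _
          _ = ENNReal.ofReal (2/(1+(n:ℝ)^2)) * ∫⁻ y in Set.Icc ((n:ℝ)*π - π/2) ((n:ℝ)*π + π/2), g y ∂volume :=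
              lintegral_const_mul' _ _ ENNReal.ofReal_ne_top
          _ = _ := by rw [auxT n]
    _ = (∑' n : ℤ, ENNReal.ofReal (2/(1+(n:ℝ)^2))) * ∫⁻ y in Set.Icc (-(π/2)) (π/2), g y :=
        ENNReal.tsum_mul_right
    _ < ⊤ := by
        apply ENNReal.mul_lt_top _ auxA
        rw [← ENNReal.ofReal_tsum_of_nonneg (fun n => by positivity) sumb]
        exact ENNReal.ofReal_lt_top

/-- For every `K > 0`, the set `{x + iy : x > 1, e^x·|cos y| ≤ K}` has finite
logarithmic area: `∫∫_C (x² + y²)^{-1} dx dy < ∞`. -/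
theorem stmt11 (K : ℝ) (hK : 0 < K) :
    ∫⁻ p in {p : ℝ × ℝ | 1 < p.1 ∧ Real.exp p.1 * |Real.cos p.2| ≤ K},
        ENNReal.ofReal (1 / (p.1 ^ 2 + p.2 ^ 2)) ∂volume < ⊤ := by
  set C : Set (ℝ × ℝ) := {p | 1 < p.1 ∧ Real.exp p.1 * |Real.cos p.2| ≤ K} with hC
  set f : ℝ × ℝ → ENNReal := fun p => ENNReal.ofReal (1 / (p.1 ^ 2 + p.2 ^ 2)) with hf
  have hCm : MeasurableSet C := by
    rw [hC, Set.setOf_and]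
    exact (measurableSet_lt measurable_const measurable_fst).inter
      (measurableSet_le ((Real.measurable_exp.comp measurable_fst).mul
        (Real.continuous_cos.measurable.comp measurable_snd).abs) measurable_const)
  have hfm : Measurable f :=
    (Measurable.div measurable_const
      ((measurable_fst.pow_const 2).add (measurable_snd.pow_const 2))).ennreal_ofReal
  have hnull : volume {y : ℝ | Real.cos y = 0} = 0 := by
    have hsub : {y : ℝ | Real.cos y = 0} ⊆ Set.range (fun n : ℤ => (2*(n:ℝ)+1) * π / 2) := by
      intro y hy
      rw [Set.mem_setOf_eq, Real.cos_eq_zero_iff] at hy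
      obtain ⟨n, hn⟩ := hy
      exact ⟨n, hn.symm⟩
    exact measure_mono_null hsub ((Set.countable_range _).measure_zero _)
  have hae : ∀ᵐ y : ℝ, Real.cos y ≠ 0 := by
    rw [ae_iff]
    simpa using hnull
  have hbd : ∀ y : ℝ, Real.cos y ≠ 0 →
      (∫⁻ x, Set.indicator C f (x, y) ∂volume) ≤
        ENNReal.ofReal (2 * Real.sqrt K) * (ENNReal.ofReal (1/(1+y^2)) * g y) := by
    intro y hcy
    have habs : 0 < |Real.cos y| := abs_pos.2 hcy
    set M : ℝ := 2 * Real.sqrt (K / |Real.cos y|) with hM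
    set c : ENNReal := ENNReal.ofReal (1/(1+y^2)) with hc
    have hptw : ∀ x : ℝ, Set.indicator C f (x, y) ≤
        Set.indicator (Set.Ioc 1 M) (fun _ => c) x := by
      intro x
      by_cases hx : (x, y) ∈ C
      · obtain ⟨hx1, hx2⟩ := id hx
        have hxM : x ≤ M := by
          have h1 : Real.exp x ≤ K / |Real.cos y| := by
            rw [le_div_iff₀ habs]; exact hx2
          have h2 : Real.exp (x/2) ≤ Real.sqrt (K / |Real.cos y|) := by
            rw [Real.exp_half]; exact Real.sqrt_le_sqrt h1
          have h3 : x/2 + 1 ≤ Real.exp (x/2) := Real.add_one_le_exp _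
          rw [hM]; linarith
        rw [Set.indicator_of_mem hx, Set.indicator_of_mem (Set.mem_Ioc.2 ⟨hx1, hxM⟩)]
        apply ENNReal.ofReal_le_ofReal
        apply one_div_le_one_div_of_le (by positivity)
        nlinarith
      · rw [Set.indicator_of_notMem hx]; exact zero_le (a := _)
    calc (∫⁻ x, Set.indicator C f (x, y) ∂volume)
        ≤ ∫⁻ x, Set.indicator (Set.Ioc 1 M) (fun _ => c) x ∂volume := lintegral_mono hptw
      _ = c * volume (Set.Ioc 1 M) := by
          rw [lintegral_indicator measurableSet_Ioc, setLIntegral_const]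
      _ ≤ c * ENNReal.ofReal M := by
          apply mul_le_mul_right
          rw [Real.volume_Ioc]
          exact ENNReal.ofReal_le_ofReal (by linarith)
      _ = ENNReal.ofReal (2 * Real.sqrt K) * (c * g y) := by
          have e1 : M = (2 * Real.sqrt K) * Real.sqrt (1/|Real.cos y|) := by
            rw [hM, div_eq_mul_one_div, Real.sqrt_mul hK.le]
            ring
          rw [e1, ENNReal.ofReal_mul (by positivity)]
          unfold g
          ring
  calc ∫⁻ p in C, f p ∂volume = ∫⁻ p, Set.indicator C f p ∂volume :=
        (lintegral_indicator hCm f).symm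
    _ = ∫⁻ y, ∫⁻ x, Set.indicator C f (x, y) ∂volume ∂volume := by
        rw [MeasureTheory.Measure.volume_eq_prod ℝ ℝ, lintegral_prod_symm' _ (hfm.indicator hCm)]
    _ ≤ ∫⁻ y, ENNReal.ofReal (2 * Real.sqrt K) * (ENNReal.ofReal (1/(1+y^2)) * g y) ∂volume :=
        lintegral_mono_ae (hae.mono hbd)
    _ = ENNReal.ofReal (2 * Real.sqrt K) * ∫⁻ y, ENNReal.ofReal (1/(1+y^2)) * g y ∂volume :=
        lintegral_const_mul' _ _ ENNReal.ofReal_ne_top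
    _ < ⊤ := ENNReal.mul_lt_top ENNReal.ofReal_lt_top auxC

end auxiliary
end

section
/- Let p and q be real polynomials, neither identically zero, and let R = p/q (so R(t) is defined for all sufficiently large real t). Then the integral ∫_x^∞ R(t)·e^{−t²} dt converges for all sufficiently large x, and (∫_x^∞ R(t)·e^{−t²} dt) / (R(x)·e^{−x²}/(2x)) → 1 as x → +∞. -/
open Filter MeasureTheory

-- polynomial times exp(x - x^2) tends to zero
lemma aux_poly_exp (p : Polynomial ℝ) :
    Tendsto (fun x : ℝ => Polynomial.eval x p * Real.exp (x - x^2)) atTop (nhds 0) := by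
  rw [tendsto_zero_iff_abs_tendsto_zero]
  apply squeeze_zero' (Eventually.of_forall fun x => abs_nonneg _)
  · filter_upwards [eventually_ge_atTop (2:ℝ)] with x hx
    have h1 : x - x^2 ≤ -x := by nlinarith
    calc |Polynomial.eval x p * Real.exp (x - x^2)|
        = |Polynomial.eval x p| * Real.exp (x - x^2) := by
          rw [abs_mul, abs_of_pos (Real.exp_pos _)]
      _ ≤ |Polynomial.eval x p| * Real.exp (-x) :=
          mul_le_mul_of_nonneg_left (Real.exp_le_exp.2 h1) (abs_nonneg _)
      _ = |Polynomial.eval x p / Real.exp x| := by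
          rw [abs_div, abs_of_pos (Real.exp_pos _), Real.exp_neg, div_eq_mul_inv]
  · have := (p.tendsto_div_exp_atTop).abs
    simpa using this

-- eventual lower bound on |eval q|
lemma aux_lower (q : Polynomial ℝ) (hq : q ≠ 0) :
    ∃ c : ℝ, 0 < c ∧ ∀ᶠ x : ℝ in atTop, c ≤ |Polynomial.eval x q| := by
  rcases eq_or_lt_of_le (Nat.zero_le q.natDegree) with h | h
  · obtain ⟨a, rfl⟩ := Polynomial.natDegree_eq_zero.mp h.symm
    refine ⟨|a|, ?_, Eventually.of_forall fun x => by simp⟩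
    simpa using fun h' => hq (by simp [h'])
  · have hdeg : 0 < q.degree := by
      rwa [Polynomial.natDegree_pos_iff_degree_pos] at h
    exact ⟨1, one_pos, (Polynomial.abs_tendsto_atTop q hdeg).eventually_ge_atTop 1⟩

-- p'/p tends to 0
lemma aux_deriv_div (p : Polynomial ℝ) (hp : p ≠ 0) :
    Tendsto (fun x : ℝ => Polynomial.eval x (Polynomial.derivative p) / Polynomial.eval x p)
      atTop (nhds 0) := by
  by_cases h : p.natDegree = 0
  · obtain ⟨a, rfl⟩ := Polynomial.natDegree_eq_zero.mp h
    simpa using tendsto_const_nhds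
  · exact Polynomial.div_tendsto_zero_of_degree_lt _ _ (Polynomial.degree_derivative_lt hp)

/-- For a real rational function `R = p/q` (with `p, q` non-zero real polynomials),
the integral `∫_x^∞ R(t)·e^{−t²} dt` converges for all large `x` and is asymptotic to
`R(x)·e^{−x²}/(2x)` as `x → +∞`. -/
theorem stmt16 (p q : Polynomial ℝ) (hp : p ≠ 0) (hq : q ≠ 0) :
    (∃ x₀ : ℝ, ∀ x : ℝ, x₀ ≤ x →
      MeasureTheory.IntegrableOn
        (fun t : ℝ => Polynomial.eval t p / Polynomial.eval t q * Real.exp (-t ^ 2))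
        (Set.Ici x)) ∧
    Filter.Tendsto
      (fun x : ℝ =>
        (∫ t in Set.Ici x, Polynomial.eval t p / Polynomial.eval t q * Real.exp (-t ^ 2)) /
          (Polynomial.eval x p / Polynomial.eval x q * Real.exp (-x ^ 2) / (2 * x)))
      Filter.atTop (nhds 1) := by
  set F : ℝ → ℝ := fun t => Polynomial.eval t p / Polynomial.eval t q * Real.exp (-t ^ 2)
    with hFdef
  -- measurability of F
  have hFmeas : Measurable F := by
    apply Measurable.mul
    · exact (p.continuous_aeval).measurable.div (q.continuous_aeval).measurable
    · exact (Real.continuous_exp.comp (continuous_pow 2).neg).measurable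
  -- nonvanishing of the polynomials eventually
  have hq0 : ∀ᶠ x : ℝ in atTop, Polynomial.eval x q ≠ 0 :=
    (Polynomial.eventually_no_roots q hq).mono fun x h => h
  have hp0 : ∀ᶠ x : ℝ in atTop, Polynomial.eval x p ≠ 0 :=
    (Polynomial.eventually_no_roots p hp).mono fun x h => h
  -- eventual bound |F t| ≤ exp (-t)
  have hFexp : ∀ᶠ t : ℝ in atTop, |F t| ≤ Real.exp (-t) := by
    obtain ⟨c, hc, hclb⟩ := aux_lower q hq
    have hnum : ∀ᶠ t : ℝ in atTop,
        |Polynomial.eval t p * Real.exp (t - t^2)| ≤ c := by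
      have := (aux_poly_exp p).abs
      simp only [abs_zero] at this
      exact this.eventually_le_const hc
    filter_upwards [hnum, hclb] with t h1 h2
    have hFt : F t = (Polynomial.eval t p * Real.exp (t - t^2)) /
        (Polynomial.eval t q * Real.exp t) := by
      have he : Real.exp (t - t^2) = Real.exp t * Real.exp (-t^2) := by
        rw [← Real.exp_add]; ring_nf
      rw [hFdef]
      simp only []
      rw [he, show Polynomial.eval t p * (Real.exp t * Real.exp (-t^2)) =
        (Polynomial.eval t p * Real.exp (-t^2)) * Real.exp t by ring,
        show Polynomial.eval t q * Real.exp t = Polynomial.eval t q * Real.exp t from rfl,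
        mul_div_mul_right _ _ (Real.exp_ne_zero t), div_mul_eq_mul_div]
    have habs : |F t| = |Polynomial.eval t p * Real.exp (t - t^2)| /
        (|Polynomial.eval t q| * Real.exp t) := by
      rw [hFt, abs_div, abs_mul (Polynomial.eval t q), abs_of_pos (Real.exp_pos t)]
    have hle : |Polynomial.eval t p * Real.exp (t - t^2)| /
        (|Polynomial.eval t q| * Real.exp t) ≤ c / (c * Real.exp t) :=
      div_le_div₀ hc.le h1 (by positivity)
        (mul_le_mul_of_nonneg_right h2 (Real.exp_pos t).le)
    have hce : c / (c * Real.exp t) = Real.exp (-t) := by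
      rw [Real.exp_neg]
      field_simp
    rw [habs]
    rw [hce] at hle
    exact hle
  -- collect eventual facts into a threshold x₀
  obtain ⟨x₀, hx₀⟩ := (hFexp.and ((eventually_ge_atTop (1:ℝ)).and hq0)).exists_forall_of_atTop
  -- Part 1: integrability
  have hInt : ∀ x : ℝ, x₀ ≤ x → IntegrableOn F (Set.Ici x) := by
    intro x hx
    rw [integrableOn_Ici_iff_integrableOn_Ioi]
    apply Integrable.mono' (g := fun t : ℝ => Real.exp (-t))
    · simpa [IntegrableOn] using exp_neg_integrableOn_Ioi x (zero_lt_one (α := ℝ))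
    · exact hFmeas.aestronglyMeasurable.restrict
    · rw [ae_restrict_iff' measurableSet_Ioi]
      refine Eventually.of_forall fun t ht => ?_
      rw [Real.norm_eq_abs]
      exact (hx₀ t (hx.trans ht.le)).1
  refine ⟨⟨x₀, hInt⟩, ?_⟩
  -- setup for part 2
  have hIoi : IntegrableOn F (Set.Ioi x₀) := (hInt x₀ le_rfl).mono_set Set.Ioi_subset_Ici_self
  set A : ℝ := ∫ t in Set.Ioi x₀, F t with hA
  set ftil : ℝ → ℝ := fun x => A - ∫ t in x₀..x, F t with hftil
  have hEq : ∀ᶠ x : ℝ in atTop, (∫ t in Set.Ici x, F t) = ftil x := by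
    filter_upwards [eventually_ge_atTop x₀] with x hx
    have hsplit : A = (∫ t in Set.Ioc x₀ x, F t) + ∫ t in Set.Ioi x, F t := by
      rw [hA, ← MeasureTheory.setIntegral_union (Set.Ioc_disjoint_Ioi le_rfl)
        measurableSet_Ioi (hIoi.mono_set Set.Ioc_subset_Ioi_self)
        ((hInt x hx).mono_set Set.Ioi_subset_Ici_self),
        Set.Ioc_union_Ioi_eq_Ioi hx]
    rw [hftil]
    simp only []
    rw [MeasureTheory.integral_Ici_eq_integral_Ioi, intervalIntegral.integral_of_le hx, hsplit]
    ring
  -- the comparison function u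
  set U : ℝ → ℝ := fun x => 1 + 1/(2*x^2) -
      (Polynomial.eval x (Polynomial.derivative p) / Polynomial.eval x p -
       Polynomial.eval x (Polynomial.derivative q) / Polynomial.eval x q) / (2*x) with hU
  have h2x : Tendsto (fun x : ℝ => 2*x) atTop atTop :=
    Tendsto.const_mul_atTop two_pos tendsto_id
  have hu : Tendsto U atTop (nhds 1) := by
    have h1 : Tendsto (fun x : ℝ => 1/(2*x^2)) atTop (nhds 0) :=
      tendsto_const_nhds.div_atTop
        (Tendsto.const_mul_atTop two_pos (tendsto_pow_atTop two_ne_zero))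
    have h2 := ((aux_deriv_div p hp).sub (aux_deriv_div q hq)).div_atTop h2x
    have h3 := ((tendsto_const_nhds (x := (1:ℝ)) (f := atTop)).add h1).sub h2
    rw [hU]
    simpa using h3
  have hu2 : ∀ᶠ x : ℝ in atTop, (1:ℝ)/2 < U x :=
    hu.eventually (eventually_gt_nhds (by norm_num))
  -- nonvanishing of F eventually
  have hF0 : ∀ᶠ x : ℝ in atTop, F x ≠ 0 := by
    filter_upwards [hp0, hq0] with x hpx hqx
    exact mul_ne_zero (div_ne_zero hpx hqx) (Real.exp_ne_zero _)
  -- derivative of the denominator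
  have hgg' : ∀ᶠ x : ℝ in atTop, HasDerivAt (fun y : ℝ => F y / (2*y)) (-(F x) * U x) x := by
    filter_upwards [hq0, hp0, eventually_ge_atTop (1:ℝ)] with x hqx hpx hx1
    have hxpos : (0:ℝ) < x := lt_of_lt_of_le zero_lt_one hx1
    have h2x0 : (2*x) ≠ 0 := by positivity
    have hP := p.hasDerivAt x
    have hQ := q.hasDerivAt x
    have hneg : HasDerivAt (fun y : ℝ => -y^2) (-(2*x)) x := by
      simpa using (hasDerivAt_pow 2 x).fun_neg
    have hE : HasDerivAt (fun y : ℝ => Real.exp (-y^2)) (Real.exp (-x^2) * -(2*x)) x :=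
      hneg.exp
    have h2y : HasDerivAt (fun y : ℝ => 2*y) 2 x := by
      simpa using (hasDerivAt_id x).const_mul (2:ℝ)
    have hD := ((hP.fun_div hQ hqx).fun_mul hE).fun_div h2y h2x0
    refine HasDerivAt.congr_deriv hD (Eq.symm ?_)
    rw [hFdef, hU]
    simp only []
    field_simp
    ring
  -- nonvanishing of the derivative
  have hg'ne : ∀ᶠ x : ℝ in atTop, -(F x) * U x ≠ 0 := by
    filter_upwards [hF0, hu2] with x hFx hux
    exact mul_ne_zero (neg_ne_zero.2 hFx) (ne_of_gt (lt_trans one_half_pos hux))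
  -- ratio of derivatives tends to 1
  have hdiv : Tendsto (fun x : ℝ => -(F x) / (-(F x) * U x)) atTop (nhds 1) := by
    have h1 : Tendsto (fun x : ℝ => (U x)⁻¹) atTop (nhds 1) := by
      simpa using hu.inv₀ one_ne_zero
    apply h1.congr'
    filter_upwards [hF0, hu2] with x hFx hux
    rw [neg_mul, neg_div_neg_eq, div_mul_cancel_left₀ hFx]
  -- numerator tends to 0
  have hf0 : Tendsto ftil atTop (nhds 0) := by
    have h := intervalIntegral_tendsto_integral_Ioi x₀ hIoi tendsto_id
    have h0 : Tendsto ftil atTop (nhds (A - A)) :=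
      (tendsto_const_nhds (x := A) (f := atTop)).sub h
    rw [sub_self] at h0
    exact h0
  -- denominator tends to 0
  have hg0 : Tendsto (fun x : ℝ => F x / (2*x)) atTop (nhds 0) := by
    rw [tendsto_zero_iff_abs_tendsto_zero]
    apply squeeze_zero' (Eventually.of_forall fun x => abs_nonneg _)
    · filter_upwards [hFexp, eventually_ge_atTop (1:ℝ)] with x h1 hx1
      calc |F x / (2*x)| = |F x| / |2*x| := abs_div _ _
        _ ≤ |F x| := div_le_self (abs_nonneg _)
            (by rw [abs_of_pos (by linarith : (0:ℝ) < 2*x)]; linarith)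
        _ ≤ Real.exp (-x) := h1
    · exact Real.tendsto_exp_neg_atTop_nhds_zero
  -- derivative of the numerator
  have hff' : ∀ᶠ x : ℝ in atTop, HasDerivAt ftil (-(F x)) x := by
    filter_upwards [hq0, eventually_gt_atTop x₀] with x hqx hx
    have hint : IntervalIntegrable F volume x₀ x := by
      apply MeasureTheory.IntegrableOn.intervalIntegrable
      apply (hInt x₀ le_rfl).mono_set
      rw [Set.uIcc_of_le hx.le]
      exact Set.Icc_subset_Ici_self
    have hmeas : StronglyMeasurableAtFilter F (nhds x) :=
      hFmeas.stronglyMeasurable.stronglyMeasurableAtFilter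
    have hcont : ContinuousAt F x := by
      apply ContinuousAt.mul
      · exact (p.continuous_aeval.continuousAt).div (q.continuous_aeval.continuousAt) hqx
      · exact ((Real.continuous_exp.comp (continuous_pow 2).neg)).continuousAt
    have hder := (intervalIntegral.integral_hasDerivAt_right hint hmeas hcont).const_sub A
    simpa using hder
  -- apply L'Hopital
  have main : Tendsto (fun x : ℝ => ftil x / (F x / (2*x))) atTop (nhds 1) :=
    HasDerivAt.lhopital_zero_atTop hff' hgg' hg'ne hf0 hg0 hdiv
  apply main.congr'
  filter_upwards [hEq] with x hx
  rw [hx]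
end
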